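/- arXiv:2307.02255 — 2 statements merged into one kernel-verified Lean document; each statement's English description precedes it below -/
import Mathlib

section
/- There is a positive numerical constant c such that the following holds: for every nondecreasing, nonnegative, convex function φ : ℝ → ℝ, every x > 0 with φ(x) > 0, and every positive integer n, P(S_n^* ≥ 4x) ≤ E(φ(S_n))/φ(x) + c·(n/x^4)·( 1 + Σ_{k≥1} k·(k ∧ x)·θ̄(k) ), where θ̄(k) = θ_{X,1,1}(k). -/
open MeasureTheory ProbabilityTheory Filter Set Asymptotics
open scoped ENNReal NNReal Topology MeasureTheory

noncomputable section

/-- The σ-algebra σ(X_i : i ≤ j) generated by the process up to time `j`. -/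
def natFiltration {Ω : Type*} [MeasurableSpace Ω] (X : ℤ → Ω → ℝ) (j : ℤ) :
    MeasurableSpace Ω :=
  ⨆ i ∈ Set.Iic j, MeasurableSpace.comap (X i) Real.measurableSpace

/-- Strict stationarity of a real-valued process indexed by ℤ. -/
def IsStrictlyStationary {Ω : Type*} [MeasurableSpace Ω] (μ : Measure Ω)
    (X : ℤ → Ω → ℝ) : Prop :=
  ∀ (n : ℕ) (t : Fin n → ℤ) (s : ℤ),
    μ.map (fun ω => fun i => X (t i + s) ω) = μ.map (fun ω => fun i => X (t i) ω)

/-- The dependence coefficient θ_{Y,p,q}(k), with conditioning σ-algebra `m`. -/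
def thetaCoef {Ω : Type*} [MeasurableSpace Ω] (μ : Measure Ω) (m : MeasurableSpace Ω)
    (Y : ℤ → Ω → ℝ) (p q k : ℕ) : ℝ :=
  ⨆ ka : {ka : (Fin p → ℤ) × (Fin p → ℕ) //
      StrictMono ka.1 ∧ (∀ i, (k : ℤ) ≤ ka.1 i) ∧
      (∀ i : Fin p, (i : ℕ) = 0 → 1 ≤ ka.2 i) ∧ (∑ i, ka.2 i) ≤ q},
    ∫ ω, |(μ[(fun ω' => ∏ i, (Y (ka.1.1 i) ω') ^ (ka.1.2 i)) | m]) ω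
        - ∫ ω', ∏ i, (Y (ka.1.1 i) ω') ^ (ka.1.2 i) ∂μ| ∂μ

/-- θ(k) = θ_{X,4,4}(k). -/
def theta {Ω : Type*} [MeasurableSpace Ω] (μ : Measure Ω) (X : ℤ → Ω → ℝ) (k : ℕ) : ℝ :=
  thetaCoef μ (natFiltration X 0) X 4 4 k

/-- Partial sums S_n = X_1 + ... + X_n. -/
def pSum {Ω : Type*} (X : ℤ → Ω → ℝ) (n : ℕ) (ω : Ω) : ℝ :=
  ∑ i ∈ Finset.range n, X (i + 1 : ℤ) ω

/-- S_n^* = max_{0 ≤ k ≤ n} S_k. -/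
def pSumMax {Ω : Type*} (X : ℤ → Ω → ℝ) (n : ℕ) (ω : Ω) : ℝ :=
  ⨆ k ∈ Finset.range (n + 1), pSum X k ω

/-- The coefficient θ̄(k) = θ_{X,1,1}(k) = sup_{j ≥ k} ‖E(X_j | F_0)‖₁. -/
def thetabar {Ω : Type*} [MeasurableSpace Ω] (μ : Measure Ω) (X : ℤ → Ω → ℝ) (k : ℕ) : ℝ :=
  ⨆ j : {j : ℤ // (k : ℤ) ≤ j}, ∫ ω, |(μ[X (j : ℤ)|natFiltration X 0]) ω| ∂μ

namespace DCF
set_option linter.unusedSectionVars false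
set_option linter.unusedVariables false

variable {Ω : Type} [m0 : MeasurableSpace Ω] {μ : Measure Ω} {X : ℤ → Ω → ℝ}

/-- The vector of the first `k` variables `X_1, ..., X_k`. -/
def Vk (X : ℤ → Ω → ℝ) (k : ℕ) : Ω → (Fin k → ℝ) := fun ω i => X ((i : ℕ) + 1 : ℤ) ω

/-- σ(X_1, ..., X_k). -/
def H (X : ℤ → Ω → ℝ) (k : ℕ) : MeasurableSpace Ω :=
  MeasurableSpace.comap (Vk X k) inferInstance

lemma measurable_Vk (hX : ∀ i, Measurable (X i)) (k : ℕ) : Measurable (Vk X k) :=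
  measurable_pi_iff.mpr fun _ => hX _

lemma H_le (hX : ∀ i, Measurable (X i)) (k : ℕ) : H X k ≤ m0 :=
  measurable_iff_comap_le.mp (measurable_Vk hX k)

lemma H_mono (X : ℤ → Ω → ℝ) {k l : ℕ} (h : k ≤ l) : H X k ≤ H X l := by
  have hV : Vk X k = (fun v : Fin l → ℝ => fun i : Fin k => v (Fin.castLE h i)) ∘ Vk X l := by
    funext ω i; rfl
  rw [H, hV, ← MeasurableSpace.comap_comp]
  exact MeasurableSpace.comap_mono
    (measurable_iff_comap_le.mp (measurable_pi_iff.mpr fun i => measurable_pi_apply _))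

lemma measurable_H_Vk (X : ℤ → Ω → ℝ) (k : ℕ) : Measurable[H X k] (Vk X k) :=
  measurable_iff_comap_le.mpr le_rfl

lemma measurable_H_pSum (X : ℤ → Ω → ℝ) {i k : ℕ} (h : i ≤ k) :
    Measurable[H X k] (pSum X i) := by
  have : pSum X i = (fun v : Fin k → ℝ =>
      ∑ q ∈ (Finset.range i).attach,
        v ⟨(q : ℕ), lt_of_lt_of_le (Finset.mem_range.mp q.2) h⟩) ∘ Vk X k := by
    funext ω
    simp only [Function.comp_apply, pSum, Vk]
    rw [← Finset.sum_attach (Finset.range i) (fun q => X ((q : ℕ) + 1 : ℤ) ω)]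
  rw [this]
  exact (Finset.measurable_sum (f := fun (q : {x // x ∈ Finset.range i}) (v : Fin k → ℝ) =>
      v ⟨(q : ℕ), lt_of_lt_of_le (Finset.mem_range.mp q.2) h⟩) _
    fun q _ => measurable_pi_apply
      (⟨(q : ℕ), lt_of_lt_of_le (Finset.mem_range.mp q.2) h⟩ : Fin k)).comp
    (measurable_H_Vk X k)

lemma measurable_H_X (X : ℤ → Ω → ℝ) {j k : ℕ} (h1 : 1 ≤ j) (h2 : j ≤ k) :
    Measurable[H X k] (X (j : ℤ)) := by
  have : X ((j : ℕ) : ℤ) = (fun v : Fin k → ℝ => v ⟨j - 1, by omega⟩) ∘ Vk X k := by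
    funext ω
    simp only [Function.comp_apply, Vk]
    congr 1
    push_cast [Nat.cast_sub h1]
    ring
  rw [this]
  exact (measurable_pi_apply _).comp (measurable_H_Vk X k)

variable (hX : ∀ i, Measurable (X i))

lemma map_single (hprob : IsProbabilityMeasure μ)
    (hstat : IsStrictlyStationary μ X) (hX : ∀ i, Measurable (X i)) (i : ℤ) :
    μ.map (X i) = μ.map (X 0) := by
  have h := hstat 1 (fun _ => 0) i
  simp only [zero_add] at h
  have e1 : μ.map (X i) = (μ.map (fun ω => fun _ : Fin 1 => X i ω)).map (fun v => v 0) := by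
    rw [Measure.map_map (measurable_pi_apply 0) (measurable_pi_iff.mpr fun _ => hX i)]
    rfl
  have e2 : μ.map (X 0) = (μ.map (fun ω => fun _ : Fin 1 => X 0 ω)).map (fun v => v 0) := by
    rw [Measure.map_map (measurable_pi_apply 0) (measurable_pi_iff.mpr fun _ => hX 0)]
    rfl
  rw [e1, e2, h]

lemma ae_abs_le (hprob : IsProbabilityMeasure μ) (hstat : IsStrictlyStationary μ X)
    (hX : ∀ i, Measurable (X i)) (hbound : ∀ᵐ ω ∂μ, |X 0 ω| ≤ 1) (i : ℤ) :
    ∀ᵐ ω ∂μ, |X i ω| ≤ 1 := by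
  rw [ae_iff]
  have hs : MeasurableSet {y : ℝ | 1 < |y|} := measurableSet_lt measurable_const measurable_abs
  have h1 : {a | ¬ |X i a| ≤ 1} = X i ⁻¹' {y : ℝ | 1 < |y|} := by
    ext a; simp [not_le]
  have h0 : {a | ¬ |X 0 a| ≤ 1} = X 0 ⁻¹' {y : ℝ | 1 < |y|} := by
    ext a; simp [not_le]
  rw [h1, ← Measure.map_apply (hX i) hs, map_single hprob hstat hX i,
    Measure.map_apply (hX 0) hs, ← h0]
  rw [ae_iff] at hbound
  exact hbound


lemma integrable_X (hprob : IsProbabilityMeasure μ) (hstat : IsStrictlyStationary μ X)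
    (hX : ∀ i, Measurable (X i)) (hbound : ∀ᵐ ω ∂μ, |X 0 ω| ≤ 1) (i : ℤ) :
    Integrable (X i) μ := by
  refine Integrable.mono' (integrable_const 1) (hX i).aestronglyMeasurable ?_
  filter_upwards [ae_abs_le hprob hstat hX hbound i] with ω hω
  simpa using hω

/-- a.e. bound for conditional expectations of the `X i`. -/
lemma ae_abs_condexp_le_one (hprob : IsProbabilityMeasure μ)
    (hstat : IsStrictlyStationary μ X) (hX : ∀ i, Measurable (X i))
    (hbound : ∀ᵐ ω ∂μ, |X 0 ω| ≤ 1) {m : MeasurableSpace Ω} (hm : m ≤ m0) (i : ℤ) :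
    ∀ᵐ ω ∂μ, |(μ[X i | m]) ω| ≤ 1 := by
  have hint := integrable_X (m0 := m0) hprob hstat hX hbound i
  have hae := ae_abs_le (m0 := m0) hprob hstat hX hbound i
  have hub : μ[X i | m] ≤ᵐ[μ] μ[(fun _ => (1:ℝ)) | m] := by
    refine condExp_mono hint (integrable_const 1 : Integrable (fun _ => (1:ℝ)) μ) ?_
    filter_upwards [hae] with ω hω
    exact le_trans (le_abs_self _) hω
  have hlb : μ[(fun _ => (-1:ℝ)) | m] ≤ᵐ[μ] μ[X i | m] := by
    refine condExp_mono (integrable_const (-1) : Integrable (fun _ => (-1:ℝ)) μ) hint ?_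
    filter_upwards [hae] with ω hω
    exact neg_le_of_abs_le hω
  have e1 : μ[(fun _ => (1:ℝ)) | m] = fun _ => (1:ℝ) := condExp_const hm 1
  have e2 : μ[(fun _ => (-1:ℝ)) | m] = fun _ => (-1:ℝ) := condExp_const hm (-1)
  rw [e1] at hub; rw [e2] at hlb
  filter_upwards [hub, hlb] with ω h1 h2
  exact abs_le.mpr ⟨h2, h1⟩

lemma integral_abs_X_le_one (hprob : IsProbabilityMeasure μ)
    (hstat : IsStrictlyStationary μ X) (hX : ∀ i, Measurable (X i))
    (hbound : ∀ᵐ ω ∂μ, |X 0 ω| ≤ 1) (i : ℤ) :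
    ∫ ω, |X i ω| ∂μ ≤ 1 := by
  have : ∫ ω, |X i ω| ∂μ ≤ ∫ _ω, (1:ℝ) ∂μ := by
    refine integral_mono_ae (integrable_X hprob hstat hX hbound i).abs (integrable_const 1) ?_
    exact ae_abs_le hprob hstat hX hbound i
  simpa using this

lemma thetabar_bddAbove (hprob : IsProbabilityMeasure μ)
    (hstat : IsStrictlyStationary μ X) (hX : ∀ i, Measurable (X i))
    (hbound : ∀ᵐ ω ∂μ, |X 0 ω| ≤ 1) (k : ℕ) :
    BddAbove (Set.range fun j : {j : ℤ // (k : ℤ) ≤ j} =>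
      ∫ ω, |(μ[X (j : ℤ)|natFiltration X 0]) ω| ∂μ) := by
  refine ⟨1, ?_⟩
  rintro y ⟨j, rfl⟩
  exact le_trans (integral_abs_condExp_le _) (integral_abs_X_le_one hprob hstat hX hbound _)

lemma le_thetabar (hprob : IsProbabilityMeasure μ)
    (hstat : IsStrictlyStationary μ X) (hX : ∀ i, Measurable (X i))
    (hbound : ∀ᵐ ω ∂μ, |X 0 ω| ≤ 1) {k : ℕ} {j : ℤ} (hj : (k : ℤ) ≤ j) :
    ∫ ω, |(μ[X j|natFiltration X 0]) ω| ∂μ ≤ thetabar μ X k :=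
  le_ciSup (thetabar_bddAbove hprob hstat hX hbound k) (⟨j, hj⟩ : {j : ℤ // (k : ℤ) ≤ j})

lemma thetabar_nonneg (hprob : IsProbabilityMeasure μ)
    (hstat : IsStrictlyStationary μ X) (hX : ∀ i, Measurable (X i))
    (hbound : ∀ᵐ ω ∂μ, |X 0 ω| ≤ 1) (k : ℕ) : 0 ≤ thetabar μ X k :=
  le_trans (integral_nonneg fun ω => abs_nonneg _)
    (le_thetabar hprob hstat hX hbound (le_refl (k : ℤ)))

lemma thetabar_antitone (hprob : IsProbabilityMeasure μ)
    (hstat : IsStrictlyStationary μ X) (hX : ∀ i, Measurable (X i))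
    (hbound : ∀ᵐ ω ∂μ, |X 0 ω| ≤ 1) {k l : ℕ} (h : k ≤ l) :
    thetabar μ X l ≤ thetabar μ X k := by
  refine ciSup_le fun j => ?_
  exact le_thetabar hprob hstat hX hbound (le_trans (by exact_mod_cast h) j.2)

lemma natFiltration_le (hX : ∀ i, Measurable (X i)) (j : ℤ) : natFiltration X j ≤ m0 := by
  refine iSup_le fun i => iSup_le fun _ => ?_
  exact measurable_iff_comap_le.mp (hX i)

/-- monotonicity of `∫ |E(f|m)|` in the σ-algebra. -/
lemma integral_abs_condexp_mono {m₁ m₂ : MeasurableSpace Ω} (h12 : m₁ ≤ m₂) (h2 : m₂ ≤ m0)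
    [IsProbabilityMeasure μ] (f : Ω → ℝ) :
    ∫ ω, |(μ[f | m₁]) ω| ∂μ ≤ ∫ ω, |(μ[f | m₂]) ω| ∂μ := by
  have h := condExp_condExp_of_le h12 h2 (f := f) (μ := μ)
  calc ∫ ω, |(μ[f | m₁]) ω| ∂μ = ∫ ω, |(μ[μ[f | m₂] | m₁]) ω| ∂μ := by
        refine integral_congr_ae ?_
        filter_upwards [h] with ω hω; rw [hω]
    _ ≤ ∫ ω, |(μ[f | m₂]) ω| ∂μ := integral_abs_condExp_le _

section Transport

/-- first `d` coordinates -/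
def frontMap (d : ℕ) : (Fin (d+1) → ℝ) → (Fin d → ℝ) := fun v i => v i.castSucc

/-- last coordinate -/
def lastMap (d : ℕ) : (Fin (d+1) → ℝ) → ℝ := fun v => v (Fin.last d)

/-- σ-algebra of the first `d` coordinates on the canonical space -/
def mFront (d : ℕ) : MeasurableSpace (Fin (d+1) → ℝ) :=
  MeasurableSpace.comap (frontMap d) MeasurableSpace.pi

/-- σ-algebra generated by the first `d` coordinates of `W` -/
def mW {Ω : Type} (d : ℕ) (W : Ω → (Fin (d+1) → ℝ)) : MeasurableSpace Ω :=
  MeasurableSpace.comap (fun ω => frontMap d (W ω)) MeasurableSpace.pi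

lemma measurable_frontMap (d : ℕ) : Measurable (frontMap d) :=
  measurable_pi_iff.mpr fun i => measurable_pi_apply _

lemma measurable_lastMap (d : ℕ) : Measurable (lastMap d) := measurable_pi_apply _

lemma mFront_le (d : ℕ) : mFront d ≤ MeasurableSpace.pi :=
  measurable_iff_comap_le.mp (measurable_frontMap d)

lemma mW_le {Ω : Type} [m0 : MeasurableSpace Ω] (d : ℕ) {W : Ω → (Fin (d+1) → ℝ)}
    (hW : Measurable W) : mW d W ≤ m0 :=
  measurable_iff_comap_le.mp ((measurable_frontMap d).comp hW)

lemma measurable_mW_W {Ω : Type} (d : ℕ) (W : Ω → (Fin (d+1) → ℝ)) :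
    Measurable[mW d W, mFront d] W := by
  rw [measurable_iff_comap_le, mFront, MeasurableSpace.comap_comp]
  exact le_of_eq rfl

/-- Pulling the conditional expectation (w.r.t. the σ-algebra generated by the first `d`
coordinates of a random vector) back to the distribution of the vector. -/
lemma condexp_front_abs_integral (hprob : IsProbabilityMeasure μ) {d : ℕ}
    {W : Ω → (Fin (d+1) → ℝ)} (hW : Measurable W)
    (hint : Integrable (fun ω => lastMap d (W ω)) μ) :
    ∫ ω, |(μ[(fun ω' => lastMap d (W ω')) | mW d W]) ω| ∂μ
    = ∫ v, |((μ.map W)[lastMap d | mFront d]) v| ∂(μ.map W) := by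
  have hπ := measurable_frontMap d
  have hglast := measurable_lastMap d
  haveI hν : IsProbabilityMeasure (μ.map W) := Measure.isProbabilityMeasure_map hW.aemeasurable
  have hlast_int : Integrable (lastMap d) (μ.map W) :=
    (integrable_map_measure hglast.aestronglyMeasurable hW.aemeasurable).mpr hint
  have hHc_sm : StronglyMeasurable[mFront d] ((μ.map W)[lastMap d | mFront d]) :=
    stronglyMeasurable_condExp
  have hHc_sm0 : AEStronglyMeasurable ((μ.map W)[lastMap d | mFront d]) (μ.map W) :=
    (hHc_sm.mono (mFront_le d)).aestronglyMeasurable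
  have hHcW_int : Integrable (fun ω => ((μ.map W)[lastMap d | mFront d]) (W ω)) μ :=
    (integrable_map_measure hHc_sm0 hW.aemeasurable).mp integrable_condExp
  have key : (fun ω => ((μ.map W)[lastMap d | mFront d]) (W ω))
      =ᵐ[μ] μ[(fun ω' => lastMap d (W ω')) | mW d W] := by
    refine ae_eq_condExp_of_forall_setIntegral_eq (mW_le d hW) hint
      (fun s _ _ => hHcW_int.integrableOn) ?_ ?_
    · rintro s hs -
      obtain ⟨B, hB, rfl⟩ := hs
      have hpre : (fun ω => frontMap d (W ω)) ⁻¹' B = W ⁻¹' (frontMap d ⁻¹' B) := rfl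
      rw [hpre, ← setIntegral_map (hπ hB) hHc_sm0 hW.aemeasurable,
        ← setIntegral_map (hπ hB) hglast.aestronglyMeasurable hW.aemeasurable]
      exact setIntegral_condExp (mFront_le d) hlast_int ⟨B, hB, rfl⟩
    · exact (hHc_sm.comp_measurable (measurable_mW_W d W)).aestronglyMeasurable
  calc ∫ ω, |(μ[(fun ω' => lastMap d (W ω')) | mW d W]) ω| ∂μ
      = ∫ ω, |((μ.map W)[lastMap d | mFront d]) (W ω)| ∂μ := by
        refine integral_congr_ae ?_
        filter_upwards [key] with ω hω
        rw [hω]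
    _ = ∫ v, |((μ.map W)[lastMap d | mFront d]) v| ∂(μ.map W) := by
        rw [integral_map hW.aemeasurable]
        have : AEStronglyMeasurable (fun v => |((μ.map W)[lastMap d | mFront d]) v|)
            (μ.map W) := by
          simpa [Real.norm_eq_abs] using hHc_sm0.norm
        exact this

end Transport

section RL1

lemma r_L1 (hprob : IsProbabilityMeasure μ) (hstat : IsStrictlyStationary μ X)
    (hX : ∀ i, Measurable (X i)) (hbound : ∀ᵐ ω ∂μ, |X 0 ω| ≤ 1)
    {j L : ℕ} (hj : 1 ≤ j) (hL : 1 ≤ L) :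
    ∫ ω, |(μ[X ((j : ℤ) + (L : ℤ)) | H X j]) ω| ∂μ ≤ thetabar μ X L := by
  haveI := hprob
  classical
  set tW : Fin (j+1) → ℤ := fun q => if (q : ℕ) < j then ((q : ℕ) + 1 : ℤ) else ((j : ℤ) + L)
    with htW_def
  set W : Ω → (Fin (j+1) → ℝ) := fun ω q => X (tW q) ω with hW_def
  set W' : Ω → (Fin (j+1) → ℝ) := fun ω q => X (tW q - j) ω with hW'_def
  have hWmeas : Measurable W := measurable_pi_iff.mpr fun q => hX _
  have hW'meas : Measurable W' := measurable_pi_iff.mpr fun q => hX _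
  have hmap : μ.map W = μ.map W' := by
    have h := hstat (j+1) (fun q => tW q - j) j
    simp only [sub_add_cancel] at h
    exact h
  -- identification of σ-algebras and functions on the W side
  have hfrontW : (fun ω => frontMap j (W ω)) = Vk X j := by
    funext ω i
    simp only [frontMap, hW_def, htW_def, Fin.coe_castSucc, Vk]
    rw [if_pos i.isLt]
  have hmWW : mW j W = H X j := by rw [mW, hfrontW]; rfl
  have hlastW : (fun ω => lastMap j (W ω)) = X ((j : ℤ) + (L : ℤ)) := by
    funext ω
    simp only [lastMap, hW_def, htW_def, Fin.val_last]
    rw [if_neg (lt_irrefl j)]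
  have hlastW' : (fun ω => lastMap j (W' ω)) = X ((L : ℤ)) := by
    funext ω
    simp only [lastMap, hW'_def, htW_def, Fin.val_last]
    rw [if_neg (lt_irrefl j)]
    norm_num
  have hintW : Integrable (fun ω => lastMap j (W ω)) μ := by
    rw [hlastW]; exact integrable_X hprob hstat hX hbound _
  have hintW' : Integrable (fun ω => lastMap j (W' ω)) μ := by
    rw [hlastW']; exact integrable_X hprob hstat hX hbound _
  -- mW j W' is contained in the past σ-algebra
  have hsub : mW j W' ≤ natFiltration X 0 := by
    have hpi : (MeasurableSpace.pi : MeasurableSpace (Fin j → ℝ))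
        = ⨆ q : Fin j, MeasurableSpace.comap (fun v : Fin j → ℝ => v q) Real.measurableSpace :=
      rfl
    rw [mW, hpi, MeasurableSpace.comap_iSup]
    refine iSup_le fun q => ?_
    rw [MeasurableSpace.comap_comp]
    have hcomp : ((fun v : Fin j → ℝ => v q) ∘ fun ω => frontMap j (W' ω))
        = X (((q : ℕ) : ℤ) + 1 - j) := by
      funext ω
      simp only [Function.comp_apply, frontMap, hW'_def, htW_def, Fin.coe_castSucc]
      rw [if_pos q.isLt]
    rw [hcomp]
    have hq0 : ((q : ℕ) : ℤ) + 1 - j ∈ Set.Iic (0 : ℤ) := by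
      simp only [Set.mem_Iic]
      have : ((q : ℕ) : ℤ) < j := by exact_mod_cast q.isLt
      omega
    exact le_iSup₂ (f := fun (i : ℤ) (_ : i ∈ Set.Iic (0:ℤ)) =>
      MeasurableSpace.comap (X i) Real.measurableSpace) _ hq0
  -- put everything together
  have e1 : ∫ ω, |(μ[X ((j : ℤ) + (L : ℤ)) | H X j]) ω| ∂μ
      = ∫ v, |((μ.map W)[lastMap j | mFront j]) v| ∂(μ.map W) := by
    rw [← hmWW, ← hlastW]
    exact condexp_front_abs_integral hprob hWmeas hintW
  have e2 : ∫ ω, |(μ[X ((L : ℤ)) | mW j W']) ω| ∂μ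
      = ∫ v, |((μ.map W')[lastMap j | mFront j]) v| ∂(μ.map W') := by
    rw [← hlastW']
    exact condexp_front_abs_integral hprob hW'meas hintW'
  rw [e1, hmap, ← e2]
  calc ∫ ω, |(μ[X ((L : ℤ)) | mW j W']) ω| ∂μ
      ≤ ∫ ω, |(μ[X ((L : ℤ)) | natFiltration X 0]) ω| ∂μ :=
        integral_abs_condexp_mono hsub (natFiltration_le hX 0) _
    _ ≤ thetabar μ X L := le_thetabar hprob hstat hX hbound (le_refl (L : ℤ))

end RL1

section Decomposition

variable (μ X)

/-- `Y_j = ∑_{g<L} E(X_{j+g} | H_j)`. -/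
def Yf (L j : ℕ) : Ω → ℝ := fun ω => ∑ g ∈ Finset.range L, (μ[X ((j : ℤ) + (g : ℤ)) | H X j]) ω

/-- `r_j = E(X_{j+L} | H_j)`. -/
def rf (L j : ℕ) : Ω → ℝ := μ[X ((j : ℤ) + (L : ℤ)) | H X j]

/-- `R_k = ∑_{j=1}^k r_j`. -/
def Rf (L k : ℕ) : Ω → ℝ := fun ω => ∑ i ∈ Finset.range k, rf μ X L (i+1) ω

/-- `Q = ∑_{j=1}^n |r_j|`. -/
def Qf (L n : ℕ) : Ω → ℝ := fun ω => ∑ i ∈ Finset.range n, |rf μ X L (i+1) ω|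

/-- `M_k = S_k - Y_1 + Y_{k+1} - R_k`. -/
def Mf (L k : ℕ) : Ω → ℝ :=
  fun ω => pSum X k ω - Yf μ X L 1 ω + Yf μ X L (k+1) ω - Rf μ X L k ω

variable {μ X}

lemma Yf_eq_sum (L j : ℕ) :
    Yf μ X L j = ∑ g ∈ Finset.range L, μ[X ((j : ℤ) + (g : ℤ)) | H X j] := by
  funext ω
  rw [Finset.sum_apply]
  rfl

lemma integrable_Yf (L j : ℕ) : Integrable (Yf μ X L j) μ :=
  integrable_finset_sum _ fun g _ => integrable_condExp

lemma integrable_rf (L j : ℕ) : Integrable (rf μ X L j) μ := integrable_condExp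

lemma integrable_Rf (L k : ℕ) : Integrable (Rf μ X L k) μ :=
  integrable_finset_sum _ fun i _ => integrable_rf _ _

lemma integrable_Qf (L n : ℕ) : Integrable (Qf μ X L n) μ :=
  integrable_finset_sum _ fun i _ => (integrable_rf (μ := μ) (X := X) L (i+1)).abs

lemma integrable_pSum (hprob : IsProbabilityMeasure μ) (hstat : IsStrictlyStationary μ X)
    (hX : ∀ i, Measurable (X i)) (hbound : ∀ᵐ ω ∂μ, |X 0 ω| ≤ 1) (k : ℕ) :
    Integrable (pSum X k) μ := by
  exact integrable_finset_sum _ fun i _ => integrable_X hprob hstat hX hbound _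

lemma integrable_Mf (hprob : IsProbabilityMeasure μ) (hstat : IsStrictlyStationary μ X)
    (hX : ∀ i, Measurable (X i)) (hbound : ∀ᵐ ω ∂μ, |X 0 ω| ≤ 1) (L k : ℕ) :
    Integrable (Mf μ X L k) μ :=
  (((integrable_pSum hprob hstat hX hbound k).sub (integrable_Yf L 1)).add
    (integrable_Yf L (k+1))).sub (integrable_Rf L k)

lemma ae_abs_Yf_le (hprob : IsProbabilityMeasure μ) (hstat : IsStrictlyStationary μ X)
    (hX : ∀ i, Measurable (X i)) (hbound : ∀ᵐ ω ∂μ, |X 0 ω| ≤ 1) (L j : ℕ) :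
    ∀ᵐ ω ∂μ, |Yf μ X L j ω| ≤ L := by
  have h : ∀ᵐ ω ∂μ, ∀ g ∈ (↑(Finset.range L) : Set ℕ),
      |(μ[X ((j : ℤ) + (g : ℤ)) | H X j]) ω| ≤ 1 := by
    rw [ae_ball_iff (Finset.range L).countable_toSet]
    intro g _
    exact ae_abs_condexp_le_one hprob hstat hX hbound (H_le hX j) _
  filter_upwards [h] with ω hω'
  have hω : ∀ g ∈ Finset.range L, |(μ[X ((j : ℤ) + (g : ℤ)) | H X j]) ω| ≤ 1 :=
    fun g hg => hω' g (by simpa using hg)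
  calc |Yf μ X L j ω| ≤ ∑ g ∈ Finset.range L, |(μ[X ((j : ℤ) + (g : ℤ)) | H X j]) ω| :=
        Finset.abs_sum_le_sum_abs _ _
    _ ≤ ∑ _g ∈ Finset.range L, (1:ℝ) := Finset.sum_le_sum fun g hg => hω g hg
    _ = L := by simp

lemma Qf_nonneg (L n : ℕ) (ω : Ω) : 0 ≤ Qf μ X L n ω :=
  Finset.sum_nonneg fun i _ => abs_nonneg _

lemma abs_Rf_le_Qf {L k n : ℕ} (h : k ≤ n) (ω : Ω) : |Rf μ X L k ω| ≤ Qf μ X L n ω := by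
  calc |Rf μ X L k ω| ≤ ∑ i ∈ Finset.range k, |rf μ X L (i+1) ω| :=
        Finset.abs_sum_le_sum_abs _ _
    _ ≤ Qf μ X L n ω :=
        Finset.sum_le_sum_of_subset_of_nonneg
          (Finset.range_subset_range.mpr h) (fun i _ _ => abs_nonneg _)

lemma integral_Qf_le (hprob : IsProbabilityMeasure μ) (hstat : IsStrictlyStationary μ X)
    (hX : ∀ i, Measurable (X i)) (hbound : ∀ᵐ ω ∂μ, |X 0 ω| ≤ 1) {L : ℕ} (hL : 1 ≤ L)
    (n : ℕ) : ∫ ω, Qf μ X L n ω ∂μ ≤ n * thetabar μ X L := by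
  have : ∫ ω, Qf μ X L n ω ∂μ = ∑ i ∈ Finset.range n, ∫ ω, |rf μ X L (i+1) ω| ∂μ :=
    integral_finset_sum _ fun i _ => (integrable_rf (μ := μ) (X := X) L (i+1)).abs
  rw [this]
  calc ∑ i ∈ Finset.range n, ∫ ω, |rf μ X L (i+1) ω| ∂μ
      ≤ ∑ _i ∈ Finset.range n, thetabar μ X L := by
        refine Finset.sum_le_sum fun i _ => ?_
        have := r_L1 hprob hstat hX hbound (j := i+1) (L := L) (by omega) hL
        exact_mod_cast this
    _ = n * thetabar μ X L := by simp [mul_comm]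

end Decomposition

section Identity

lemma condexp_X_self (hprob : IsProbabilityMeasure μ) (hstat : IsStrictlyStationary μ X)
    (hX : ∀ i, Measurable (X i)) (hbound : ∀ᵐ ω ∂μ, |X 0 ω| ≤ 1) {j : ℕ} (hj : 1 ≤ j) :
    μ[X ((j : ℕ) : ℤ) | H X j] = X ((j : ℕ) : ℤ) := by
  haveI := hprob
  exact condExp_of_stronglyMeasurable (H_le hX j)
    ((measurable_H_X X hj le_rfl).stronglyMeasurable)
    (integrable_X hprob hstat hX hbound _)

/-- The key martingale-difference identity:
`E(Y_{j+1} | H_j) = Y_j - X_j + r_j` a.e. -/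
lemma condexp_Yf_succ (hprob : IsProbabilityMeasure μ) (hstat : IsStrictlyStationary μ X)
    (hX : ∀ i, Measurable (X i)) (hbound : ∀ᵐ ω ∂μ, |X 0 ω| ≤ 1)
    {L j : ℕ} (hL : 1 ≤ L) (hj : 1 ≤ j) :
    μ[Yf μ X L (j+1) | H X j]
      =ᵐ[μ] fun ω => Yf μ X L j ω - X ((j : ℕ) : ℤ) ω + rf μ X L j ω := by
  haveI := hprob
  obtain ⟨L', rfl⟩ : ∃ L', L = L' + 1 := ⟨L - 1, by omega⟩
  -- first: condexp of the sum, then tower property termwise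
  have h1 : μ[Yf μ X (L'+1) (j+1) | H X j]
      =ᵐ[μ] ∑ g ∈ Finset.range (L'+1), μ[μ[X (((j+1 : ℕ) : ℤ) + (g : ℤ)) | H X (j+1)] | H X j] := by
    rw [Yf_eq_sum]
    exact condExp_finsetSum (fun g _ => integrable_condExp) _
  have h2 : ∀ᵐ ω ∂μ, ∀ g ∈ (↑(Finset.range (L'+1)) : Set ℕ),
      (μ[μ[X (((j+1 : ℕ) : ℤ) + (g : ℤ)) | H X (j+1)] | H X j]) ω
        = (μ[X (((j+1 : ℕ) : ℤ) + (g : ℤ)) | H X j]) ω := by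
    rw [ae_ball_iff (Finset.range (L'+1)).countable_toSet]
    intro g _
    filter_upwards [condExp_condExp_of_le (H_mono X (Nat.le_succ j)) (H_le hX (j+1))
      (f := X (((j+1 : ℕ) : ℤ) + (g : ℤ))) (μ := μ)] with ω hω
    rw [hω]
  filter_upwards [h1, h2] with ω hω1 hω2
  rw [hω1, Finset.sum_apply]
  have hstep : ∑ g ∈ Finset.range (L'+1),
      (μ[μ[X (((j+1 : ℕ) : ℤ) + (g : ℤ)) | H X (j+1)] | H X j]) ω
      = ∑ g ∈ Finset.range (L'+1), (μ[X (((j+1 : ℕ) : ℤ) + (g : ℤ)) | H X j]) ω :=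
    Finset.sum_congr rfl fun g hg => hω2 g (by simpa using hg)
  rw [hstep]
  -- now a purely algebraic identity between finite sums of conditional expectations
  have expand1 : ∑ g ∈ Finset.range (L'+1), (μ[X (((j+1 : ℕ) : ℤ) + (g : ℤ)) | H X j]) ω
      = (∑ g ∈ Finset.range L', (μ[X (((j+1 : ℕ) : ℤ) + (g : ℤ)) | H X j]) ω)
        + rf μ X (L'+1) j ω := by
    rw [Finset.sum_range_succ]
    congr 2
    push_cast
    ring
  have expand2 : Yf μ X (L'+1) j ω
      = X ((j : ℕ) : ℤ) ω + ∑ g ∈ Finset.range L', (μ[X (((j+1 : ℕ) : ℤ) + (g : ℤ)) | H X j]) ω := by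
    have : Yf μ X (L'+1) j ω
        = ∑ g ∈ Finset.range (L'+1), (μ[X ((j : ℤ) + (g : ℤ)) | H X j]) ω := rfl
    rw [this, Finset.sum_range_succ']
    have e0 : (μ[X ((j : ℤ) + ((0:ℕ) : ℤ)) | H X j]) ω = X ((j : ℕ) : ℤ) ω := by
      have : ((j : ℤ) + ((0:ℕ) : ℤ)) = ((j : ℕ) : ℤ) := by push_cast; ring
      rw [this, condexp_X_self hprob hstat hX hbound hj]
    rw [e0, add_comm]
    congr 1
    refine Finset.sum_congr rfl fun g hg => ?_
    congr 2
    push_cast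
    ring
  rw [expand1, expand2]
  ring

/-- Orthogonality: for `s ∈ H_k`, `k ≤ j`, `∫_s (X_j + Y_{j+1} - Y_j - r_j) = 0`. -/
lemma setIntegral_diff_zero (hprob : IsProbabilityMeasure μ) (hstat : IsStrictlyStationary μ X)
    (hX : ∀ i, Measurable (X i)) (hbound : ∀ᵐ ω ∂μ, |X 0 ω| ≤ 1)
    {L j : ℕ} (hL : 1 ≤ L) (hj : 1 ≤ j) {s : Set Ω} (hs : MeasurableSet[H X j] s) :
    ∫ ω in s, (X ((j : ℕ) : ℤ) ω + Yf μ X L (j+1) ω - Yf μ X L j ω - rf μ X L j ω) ∂μ = 0 := by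
  haveI := hprob
  have hs0 : MeasurableSet s := H_le hX j s hs
  have hcongr : ∫ ω in s, (X ((j : ℕ) : ℤ) ω + Yf μ X L (j+1) ω - Yf μ X L j ω - rf μ X L j ω) ∂μ
      = ∫ ω in s, (Yf μ X L (j+1) ω - (μ[Yf μ X L (j+1) | H X j]) ω) ∂μ := by
    refine integral_congr_ae ?_
    have h := condexp_Yf_succ hprob hstat hX hbound hL hj
    filter_upwards [ae_restrict_of_ae h] with ω hω
    rw [hω]
    ring
  rw [hcongr, integral_sub ((integrable_Yf L (j+1)).integrableOn)
    (integrable_condExp.integrableOn),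
    setIntegral_condExp (H_le hX j) (integrable_Yf L (j+1)) hs, sub_self]

/-- `∫_s M_n = ∫_s M_k` for `s ∈ H_k`. -/
lemma setIntegral_Mf_eq (hprob : IsProbabilityMeasure μ) (hstat : IsStrictlyStationary μ X)
    (hX : ∀ i, Measurable (X i)) (hbound : ∀ᵐ ω ∂μ, |X 0 ω| ≤ 1)
    {L k n : ℕ} (hL : 1 ≤ L) (hkn : k ≤ n) {s : Set Ω} (hs : MeasurableSet[H X k] s) :
    ∫ ω in s, Mf μ X L n ω ∂μ = ∫ ω in s, Mf μ X L k ω ∂μ := by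
  haveI := hprob
  have hs0 : MeasurableSet s := H_le hX k s hs
  have hdiff : ∀ ω, Mf μ X L n ω - Mf μ X L k ω
      = ∑ i ∈ Finset.Ico k n, (X (((i+1 : ℕ)) : ℤ) ω + Yf μ X L (i+2) ω
          - Yf μ X L (i+1) ω - rf μ X L (i+1) ω) := by
    intro ω
    have hS : pSum X n ω - pSum X k ω = ∑ i ∈ Finset.Ico k n, X ((i:ℤ) + 1) ω := by
      rw [Finset.sum_Ico_eq_sub _ hkn]; rfl
    have hY : Yf μ X L (n+1) ω - Yf μ X L (k+1) ω
        = ∑ i ∈ Finset.Ico k n, (Yf μ X L (i+2) ω - Yf μ X L (i+1) ω) := by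
      rw [Finset.sum_Ico_eq_sub _ hkn, Finset.sum_range_sub (fun i => Yf μ X L (i+1) ω),
        Finset.sum_range_sub (fun i => Yf μ X L (i+1) ω)]
      ring
    have hR : Rf μ X L n ω - Rf μ X L k ω = ∑ i ∈ Finset.Ico k n, rf μ X L (i+1) ω := by
      rw [Finset.sum_Ico_eq_sub _ hkn]; rfl
    have : Mf μ X L n ω - Mf μ X L k ω
        = (pSum X n ω - pSum X k ω) + (Yf μ X L (n+1) ω - Yf μ X L (k+1) ω)
          - (Rf μ X L n ω - Rf μ X L k ω) := by
      simp only [Mf]; ring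
    rw [this, hS, hY, hR, ← Finset.sum_add_distrib, ← Finset.sum_sub_distrib]
    refine Finset.sum_congr rfl fun i _ => ?_
    have : ((i:ℤ) + 1) = (((i+1 : ℕ)) : ℤ) := by push_cast; ring
    rw [this]
    ring
  have hzero : ∫ ω in s, (Mf μ X L n ω - Mf μ X L k ω) ∂μ = 0 := by
    have hrw : (fun ω => Mf μ X L n ω - Mf μ X L k ω)
        = fun ω => ∑ i ∈ Finset.Ico k n, (X (((i+1 : ℕ)) : ℤ) ω + Yf μ X L (i+2) ω
            - Yf μ X L (i+1) ω - rf μ X L (i+1) ω) := by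
      funext ω; exact hdiff ω
    rw [hrw, integral_finset_sum]
    · refine Finset.sum_eq_zero fun i hi => ?_
      have hki : k ≤ i := (Finset.mem_Ico.mp hi).1
      have hs' : MeasurableSet[H X (i+1)] s := H_mono X (by omega) s hs
      exact setIntegral_diff_zero hprob hstat hX hbound hL (by omega) hs'
    · intro i _
      exact ((((integrable_X hprob hstat hX hbound _).add (integrable_Yf L (i+2))).sub
        (integrable_Yf L (i+1))).sub (integrable_rf L (i+1))).integrableOn
  have hint_n := (integrable_Mf hprob hstat hX hbound L n).integrableOn (s := s)
  have hint_k := (integrable_Mf hprob hstat hX hbound L k).integrableOn (s := s)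
  have := integral_sub hint_n hint_k
  rw [← sub_eq_zero, ← this]
  exact hzero

end Identity

section Events

variable (X)

/-- `E_k = {S_k ≥ 4x}`. -/
def Ek (x : ℝ) (k : ℕ) : Set Ω := {ω | 4 * x ≤ pSum X k ω}

/-- `D_k = E_k minus the earlier `E_i``: the first time `S` exceeds `4x` is `k`. -/
def Dk (x : ℝ) (k : ℕ) : Set Ω := Ek X x k \ ⋃ (i : ℕ) (_ : i < k), Ek X x i

variable {X}

lemma measurableSet_Ek_H {x : ℝ} {i k : ℕ} (h : i ≤ k) : MeasurableSet[H X k] (Ek X x i) :=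
  measurableSet_le measurable_const (measurable_H_pSum X h)

lemma measurableSet_Dk_H {x : ℝ} (k : ℕ) : MeasurableSet[H X k] (Dk X x k) := by
  refine (measurableSet_Ek_H le_rfl).diff ?_
  exact MeasurableSet.iUnion fun i => MeasurableSet.iUnion fun hi =>
    measurableSet_Ek_H (le_of_lt hi)

lemma measurableSet_Dk (hX : ∀ i, Measurable (X i)) {x : ℝ} (k : ℕ) :
    MeasurableSet (Dk X x k) :=
  H_le hX k _ (measurableSet_Dk_H k)

lemma Dk_disjoint {x : ℝ} {k l : ℕ} (h : k < l) : Disjoint (Dk X x k) (Dk X x l) := by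
  refine Set.disjoint_left.mpr fun ω hk hl => ?_
  exact hl.2 (Set.mem_iUnion.mpr ⟨k, Set.mem_iUnion.mpr ⟨h, hk.1⟩⟩)

lemma Ek_subset_union_Dk {x : ℝ} {n : ℕ} :
    ∀ k ≤ n, ∀ ω ∈ Ek X x k, ∃ l, l ≤ k ∧ ω ∈ Dk X x l := by
  intro k
  induction k using Nat.strong_induction_on with
  | _ k ih =>
    intro hkn ω hω
    by_cases h : ∃ i, i < k ∧ ω ∈ Ek X x i
    · obtain ⟨i, hik, hωi⟩ := h
      obtain ⟨l, hl, hωl⟩ := ih i hik (by omega) ω hωi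
      exact ⟨l, by omega, hωl⟩
    · refine ⟨k, le_rfl, hω, ?_⟩
      intro hmem
      rw [Set.mem_iUnion] at hmem
      obtain ⟨i, hi⟩ := hmem
      rw [Set.mem_iUnion] at hi
      obtain ⟨hik, hωi⟩ := hi
      exact h ⟨i, hik, hωi⟩

lemma pSum_zero (ω : Ω) : pSum X 0 ω = 0 := by simp [pSum]

lemma pSumMax_iff {n : ℕ} {x : ℝ} (hx : 0 < x) (hn : 0 < n) (ω : Ω) :
    4 * x ≤ pSumMax X n ω ↔ ∃ k ∈ Finset.Icc 1 n, ω ∈ Ek X x k := by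
  classical
  set g : ℕ → ℝ := fun k => ⨆ (_ : k ∈ Finset.range (n+1)), pSum X k ω with hg_def
  have hgval : ∀ k ∈ Finset.range (n+1), g k = pSum X k ω := fun k hk => ciSup_pos hk
  have hgval' : ∀ k, k ∉ Finset.range (n+1) → g k = 0 := by
    intro k hk
    have : IsEmpty (k ∈ Finset.range (n+1)) := ⟨hk⟩
    exact Real.iSup_of_isEmpty _
  set B : ℝ := max 0 ((Finset.range (n+1)).sup' ⟨0, by simp⟩ (fun k => pSum X k ω)) with hB_def
  have hgB : ∀ k, g k ≤ B := by
    intro k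
    by_cases hk : k ∈ Finset.range (n+1)
    · rw [hgval k hk]
      exact le_max_of_le_right (Finset.le_sup' (fun k => pSum X k ω) hk)
    · rw [hgval' k hk]
      exact le_max_left _ _
  have hmax : pSumMax X n ω = ⨆ k, g k := rfl
  constructor
  · intro h
    by_contra hno
    push_neg at hno
    have hlt : ∀ k ∈ Finset.range (n+1), pSum X k ω < 4 * x := by
      intro k hk
      rcases Nat.eq_zero_or_pos k with rfl | hkpos
      · rw [pSum_zero]; positivity
      · have : k ∈ Finset.Icc 1 n := Finset.mem_Icc.mpr ⟨hkpos, by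
          have := Finset.mem_range.mp hk; omega⟩
        have := hno k this
        simpa [Ek, not_le] using this
    have hBlt : B < 4 * x := by
      rw [hB_def]
      refine max_lt (by positivity) ?_
      exact (Finset.sup'_lt_iff _).mpr hlt
    have : pSumMax X n ω ≤ B := by
      rw [hmax]
      exact ciSup_le hgB
    linarith
  · rintro ⟨k, hk, hωk⟩
    have hk' : k ∈ Finset.range (n+1) := by
      rw [Finset.mem_range]
      have := (Finset.mem_Icc.mp hk).2; omega
    have : g k = pSum X k ω := hgval k hk'
    have hle : g k ≤ pSumMax X n ω := by
      rw [hmax]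
      exact le_ciSup ⟨B, by rintro y ⟨k', rfl⟩; exact hgB k'⟩ k
    rw [this] at hle
    exact le_trans hωk hle

lemma event_eq_biUnion_Dk (hX : ∀ i, Measurable (X i)) {n : ℕ} {x : ℝ} (hx : 0 < x)
    (hn : 0 < n) :
    {ω | 4 * x ≤ pSumMax X n ω} = ⋃ k ∈ Finset.Icc 1 n, Dk X x k := by
  ext ω
  rw [Set.mem_setOf_eq, pSumMax_iff hx hn ω]
  constructor
  · rintro ⟨k, hk, hωk⟩
    obtain ⟨hk1, hkn⟩ := Finset.mem_Icc.mp hk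
    obtain ⟨l, hlk, hωl⟩ := Ek_subset_union_Dk k hkn ω hωk
    have hl1 : 1 ≤ l := by
      by_contra hl0
      push_neg at hl0
      interval_cases l
      have : ω ∈ Ek X x 0 := hωl.1
      simp only [Ek, pSum_zero, Set.mem_setOf_eq] at this
      nlinarith
    exact Set.mem_biUnion (Finset.mem_Icc.mpr ⟨hl1, le_trans hlk hkn⟩) hωl
  · intro h
    obtain ⟨k, hk, hωk⟩ := Set.mem_iUnion₂.mp h
    exact ⟨k, hk, hωk.1⟩

end Events

section MainBound

lemma main_bound (hprob : IsProbabilityMeasure μ) (hstat : IsStrictlyStationary μ X)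
    (hX : ∀ i, Measurable (X i)) (hbound : ∀ᵐ ω ∂μ, |X 0 ω| ≤ 1)
    {n L : ℕ} (hn : 0 < n) (hL1 : 1 ≤ L) {x b : ℝ} (hx : 0 < x) (hbx : b < x)
    (hL4 : 4 * (L : ℝ) ≤ x) :
    (μ {ω | 4 * x ≤ pSumMax X n ω}).toReal
      ≤ (∫ ω, max (pSum X n ω - b) 0 ∂μ) / (x - b) + (n : ℝ) * thetabar μ X L / x := by
  haveI := hprob
  classical
  set K := Finset.Icc 1 n with hK_def
  set β : ℝ := b + 2 * L with hβ_def
  set c₀ : ℝ := 4 * x - 4 * L - b with hc₀_def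
  have hc₀_xb : x - b ≤ c₀ := by rw [hc₀_def]; linarith
  have hc₀_2x : 2 * x ≤ c₀ := by rw [hc₀_def]; linarith
  have hc₀_pos : 0 < c₀ := by linarith
  have hxb_pos : 0 < x - b := by linarith
  have hAeq := event_eq_biUnion_Dk (X := X) hX (n := n) hx hn
  set G : Ω → ℝ := fun ω => Mf μ X L n ω - β with hG_def
  have hG_int : Integrable G μ :=
    (integrable_Mf hprob hstat hX hbound L n).sub (integrable_const β)
  have hQ_int : Integrable (Qf μ X L n) μ := integrable_Qf L n
  have hDmeas : ∀ k ∈ K, MeasurableSet (Dk X x k) := fun k _ => measurableSet_Dk hX k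
  have hDdisj : Set.Pairwise (↑K) (Function.onFun Disjoint (Dk X x)) := by
    intro k hk l hl hkl
    rcases lt_or_gt_of_ne hkl with h | h
    · exact Dk_disjoint h
    · exact (Dk_disjoint h).symm
  -- Step 0 : p = ∑ μ(D_k)
  have hp_eq : (μ {ω | 4 * x ≤ pSumMax X n ω}).toReal
      = ∑ k ∈ K, (μ (Dk X x k)).toReal := by
    rw [hAeq, measure_biUnion_finset hDdisj hDmeas]
    exact ENNReal.toReal_sum fun k _ => measure_ne_top μ _
  -- Step 1 : per-k lower bound
  have hstep1 : ∀ k ∈ K, c₀ * (μ (Dk X x k)).toReal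
      ≤ (∫ ω in Dk X x k, G ω ∂μ) + ∫ ω in Dk X x k, Qf μ X L n ω ∂μ := by
    intro k hk
    obtain ⟨hk1, hkn⟩ := Finset.mem_Icc.mp hk
    have hDk_meas : MeasurableSet (Dk X x k) := measurableSet_Dk hX k
    -- (a) optional stopping : ∫_{D_k} M_n = ∫_{D_k} M_k
    have hMeq : ∫ ω in Dk X x k, Mf μ X L n ω ∂μ = ∫ ω in Dk X x k, Mf μ X L k ω ∂μ :=
      setIntegral_Mf_eq hprob hstat hX hbound hL1 hkn (measurableSet_Dk_H k)
    -- (b) pointwise bound on D_k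
    have hae : ∀ᵐ ω ∂(μ.restrict (Dk X x k)),
        c₀ - Qf μ X L n ω ≤ Mf μ X L k ω - β := by
      filter_upwards [ae_restrict_of_ae (ae_abs_Yf_le hprob hstat hX hbound L 1),
        ae_restrict_of_ae (ae_abs_Yf_le hprob hstat hX hbound L (k+1)),
        ae_restrict_mem hDk_meas] with ω h1 h2 hmem
      have hS : 4 * x ≤ pSum X k ω := hmem.1
      have hR : |Rf μ X L k ω| ≤ Qf μ X L n ω := abs_Rf_le_Qf hkn ω
      have h1' := abs_le.mp h1
      have h2' := abs_le.mp h2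
      have hR' := abs_le.mp hR
      simp only [Mf]
      rw [hβ_def, hc₀_def]
      linarith [h1'.1, h1'.2, h2'.1, h2'.2, hR'.1, hR'.2]
    have hmono : ∫ ω in Dk X x k, (c₀ - Qf μ X L n ω) ∂μ
        ≤ ∫ ω in Dk X x k, (Mf μ X L k ω - β) ∂μ :=
      setIntegral_mono_ae_restrict
        (((integrable_const c₀).sub hQ_int).integrableOn)
        (((integrable_Mf hprob hstat hX hbound L k).sub (integrable_const β)).integrableOn)
        hae
    have hconst : ∫ ω in Dk X x k, (c₀ - Qf μ X L n ω) ∂μ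
        = c₀ * (μ (Dk X x k)).toReal - ∫ ω in Dk X x k, Qf μ X L n ω ∂μ := by
      rw [integral_sub ((integrable_const c₀).integrableOn) (hQ_int.integrableOn),
        setIntegral_const, smul_eq_mul, measureReal_def]
      ring
    have hMk : ∫ ω in Dk X x k, (Mf μ X L k ω - β) ∂μ
        = ∫ ω in Dk X x k, G ω ∂μ := by
      rw [hG_def]
      rw [integral_sub ((integrable_Mf hprob hstat hX hbound L k).integrableOn)
        ((integrable_const β).integrableOn),
        integral_sub ((integrable_Mf hprob hstat hX hbound L n).integrableOn)
        ((integrable_const β).integrableOn), hMeq]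
    rw [hconst, hMk] at hmono
    linarith
  -- Step 2 : sum over k
  have hsum_G : ∑ k ∈ K, ∫ ω in Dk X x k, G ω ∂μ
      = ∫ ω in ⋃ k ∈ K, Dk X x k, G ω ∂μ :=
    (integral_biUnion_finset K hDmeas hDdisj fun k _ => hG_int.integrableOn).symm
  have hsum_Q : ∑ k ∈ K, ∫ ω in Dk X x k, Qf μ X L n ω ∂μ
      = ∫ ω in ⋃ k ∈ K, Dk X x k, Qf μ X L n ω ∂μ :=
    (integral_biUnion_finset K hDmeas hDdisj fun k _ => hQ_int.integrableOn).symm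
  -- Step 3 : upper bound for ∫_A G
  have hG_le : ∀ᵐ ω ∂μ, G ω ≤ max (pSum X n ω - b) 0 + Qf μ X L n ω := by
    filter_upwards [ae_abs_Yf_le hprob hstat hX hbound L 1,
      ae_abs_Yf_le hprob hstat hX hbound L (n+1)] with ω h1 h2
    have hR' := abs_le.mp (abs_Rf_le_Qf (μ := μ) (X := X) (L := L) (le_refl n) ω)
    have h1' := abs_le.mp h1
    have h2' := abs_le.mp h2
    have : G ω ≤ (pSum X n ω - b) + Qf μ X L n ω := by
      rw [hG_def]
      simp only [Mf]
      rw [hβ_def]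
      linarith [h1'.1, h1'.2, h2'.1, h2'.2, hR'.1, hR'.2]
    exact le_trans this (by
      have := le_max_left (pSum X n ω - b) 0
      linarith)
  have hIb_int : Integrable (fun ω => max (pSum X n ω - b) 0) μ :=
    Integrable.pos_part ((integrable_pSum hprob hstat hX hbound n).sub (integrable_const b))
  have hupper_int : Integrable (fun ω => max (pSum X n ω - b) 0 + Qf μ X L n ω) μ :=
    hIb_int.add hQ_int
  have hstep3 : ∫ ω in ⋃ k ∈ K, Dk X x k, G ω ∂μ
      ≤ ∫ ω, (max (pSum X n ω - b) 0 + Qf μ X L n ω) ∂μ := by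
    have hUm : MeasurableSet (⋃ k ∈ K, Dk X x k) :=
      Finset.measurableSet_biUnion K hDmeas
    calc ∫ ω in ⋃ k ∈ K, Dk X x k, G ω ∂μ
        ≤ ∫ ω in ⋃ k ∈ K, Dk X x k, (max (pSum X n ω - b) 0 + Qf μ X L n ω) ∂μ :=
          setIntegral_mono_ae_restrict (hG_int.integrableOn) (hupper_int.integrableOn)
            (ae_restrict_of_ae hG_le)
      _ ≤ ∫ ω, (max (pSum X n ω - b) 0 + Qf μ X L n ω) ∂μ := by
          refine setIntegral_le_integral hupper_int ?_
          filter_upwards with ω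
          have := Qf_nonneg (μ := μ) (X := X) L n ω
          have := le_max_right (pSum X n ω - b) 0
          positivity
  -- Step 4 : ∫_A Q ≤ ∫ Q ≤ n θ̄(L)
  have hQA : ∫ ω in ⋃ k ∈ K, Dk X x k, Qf μ X L n ω ∂μ ≤ (n : ℝ) * thetabar μ X L := by
    refine le_trans (setIntegral_le_integral hQ_int ?_) ?_
    · filter_upwards with ω; exact Qf_nonneg L n ω
    · exact integral_Qf_le hprob hstat hX hbound hL1 n
  have hQfull : ∫ ω, (max (pSum X n ω - b) 0 + Qf μ X L n ω) ∂μ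
      ≤ (∫ ω, max (pSum X n ω - b) 0 ∂μ) + (n : ℝ) * thetabar μ X L := by
    rw [integral_add hIb_int hQ_int]
    exact add_le_add le_rfl (integral_Qf_le hprob hstat hX hbound hL1 n)
  -- Combine
  have hfinal : c₀ * (μ {ω | 4 * x ≤ pSumMax X n ω}).toReal
      ≤ (∫ ω, max (pSum X n ω - b) 0 ∂μ) + 2 * ((n : ℝ) * thetabar μ X L) := by
    rw [hp_eq, Finset.mul_sum]
    calc ∑ k ∈ K, c₀ * (μ (Dk X x k)).toReal
        ≤ ∑ k ∈ K, ((∫ ω in Dk X x k, G ω ∂μ) + ∫ ω in Dk X x k, Qf μ X L n ω ∂μ) :=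
          Finset.sum_le_sum hstep1
      _ = (∫ ω in ⋃ k ∈ K, Dk X x k, G ω ∂μ)
            + ∫ ω in ⋃ k ∈ K, Dk X x k, Qf μ X L n ω ∂μ := by
          rw [Finset.sum_add_distrib, hsum_G, hsum_Q]
      _ ≤ ((∫ ω, max (pSum X n ω - b) 0 ∂μ) + (n : ℝ) * thetabar μ X L)
            + (n : ℝ) * thetabar μ X L :=
          add_le_add (le_trans hstep3 hQfull) hQA
      _ = (∫ ω, max (pSum X n ω - b) 0 ∂μ) + 2 * ((n : ℝ) * thetabar μ X L) := by ring
  -- arithmetic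
  set p := (μ {ω | 4 * x ≤ pSumMax X n ω}).toReal with hp_def
  set I := ∫ ω, max (pSum X n ω - b) 0 ∂μ with hI_def
  set J := (n : ℝ) * thetabar μ X L with hJ_def
  have hI_nonneg : 0 ≤ I := by
    rw [hI_def]
    exact integral_nonneg fun ω => le_max_right _ _
  have hJ_nonneg : 0 ≤ J := by
    rw [hJ_def]
    exact mul_nonneg (Nat.cast_nonneg n) (thetabar_nonneg hprob hstat hX hbound L)
  have h1 : p ≤ (I + 2 * J) / c₀ := by
    rw [le_div_iff₀ hc₀_pos]
    linarith [hfinal]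
  calc p ≤ (I + 2 * J) / c₀ := h1
    _ = I / c₀ + 2 * J / c₀ := by ring
    _ ≤ I / (x - b) + 2 * J / (2 * x) := by
        refine add_le_add ?_ ?_
        · exact div_le_div_of_nonneg_left hI_nonneg hxb_pos hc₀_xb
        · exact div_le_div_of_nonneg_left (by linarith) (by linarith) hc₀_2x
    _ = I / (x - b) + J / x := by
        rw [mul_div_mul_left J x (two_ne_zero)]
    _ = I / (x - b) + (n : ℝ) * thetabar μ X L / x := rfl

end MainBound

section Tangent

lemma convex_tangent {φ : ℝ → ℝ} (hmono : Monotone φ) (hconv : ConvexOn ℝ Set.univ φ)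
    (x : ℝ) : ∃ a : ℝ, 0 ≤ a ∧ ∀ t, φ x + a * (t - x) ≤ φ t := by
  set S : Set ℝ := (fun u => (φ x - φ u) / (x - u)) '' Set.Iio x with hS_def
  have hne : S.Nonempty := ⟨_, ⟨x - 1, by simp, rfl⟩⟩
  have hbdd : BddAbove S := by
    refine ⟨(φ (x+1) - φ x) / ((x+1) - x), ?_⟩
    rintro s ⟨u, hu, rfl⟩
    have := hconv.slope_mono_adjacent (Set.mem_univ u) (Set.mem_univ (x+1))
      (Set.mem_Iio.mp hu) (by linarith)
    exact this
  set a : ℝ := sSup S with ha_def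
  have hmem : ∀ u < x, (φ x - φ u) / (x - u) ≤ a := fun u hu =>
    le_csSup hbdd ⟨u, Set.mem_Iio.mpr hu, rfl⟩
  have ha0 : 0 ≤ a := by
    have h1 : (φ x - φ (x - 1)) / (x - (x - 1)) ≤ a := hmem (x-1) (by linarith)
    have h2 : 0 ≤ (φ x - φ (x - 1)) / (x - (x - 1)) := by
      have := hmono (show x - 1 ≤ x by linarith)
      have hd : x - (x - 1) = 1 := by ring
      rw [hd, div_one]
      linarith
    linarith
  refine ⟨a, ha0, fun t => ?_⟩
  rcases lt_trichotomy t x with htx | htx | htx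
  · have h := hmem t htx
    have hpos : 0 < x - t := by linarith
    rw [div_le_iff₀ hpos] at h
    nlinarith
  · subst htx; simp
  · have h : a ≤ (φ t - φ x) / (t - x) := by
      refine csSup_le hne ?_
      rintro s ⟨u, hu, rfl⟩
      exact hconv.slope_mono_adjacent (Set.mem_univ u) (Set.mem_univ t)
        (Set.mem_Iio.mp hu) htx
    have hpos : 0 < t - x := by linarith
    rw [le_div_iff₀ hpos] at h
    linarith

end Tangent

section FinalHelpers

lemma ae_abs_pSum_le (hprob : IsProbabilityMeasure μ) (hstat : IsStrictlyStationary μ X)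
    (hX : ∀ i, Measurable (X i)) (hbound : ∀ᵐ ω ∂μ, |X 0 ω| ≤ 1) (n : ℕ) :
    ∀ᵐ ω ∂μ, |pSum X n ω| ≤ n := by
  have h : ∀ᵐ ω ∂μ, ∀ i ∈ (↑(Finset.range n) : Set ℕ), |X ((i : ℤ) + 1) ω| ≤ 1 := by
    rw [ae_ball_iff (Finset.range n).countable_toSet]
    intro i _
    exact ae_abs_le hprob hstat hX hbound _
  filter_upwards [h] with ω hω
  calc |pSum X n ω| ≤ ∑ i ∈ Finset.range n, |X ((i : ℤ) + 1) ω| :=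
        Finset.abs_sum_le_sum_abs _ _
    _ ≤ ∑ _i ∈ Finset.range n, (1:ℝ) :=
        Finset.sum_le_sum fun i hi => hω i (by simpa using hi)
    _ = n := by simp

lemma measurable_pSum (hX : ∀ i, Measurable (X i)) (n : ℕ) : Measurable (pSum X n) :=
  Finset.measurable_sum _ fun i _ => hX _

lemma integrable_phi_pSum (hprob : IsProbabilityMeasure μ) (hstat : IsStrictlyStationary μ X)
    (hX : ∀ i, Measurable (X i)) (hbound : ∀ᵐ ω ∂μ, |X 0 ω| ≤ 1)
    {φ : ℝ → ℝ} (hmono : Monotone φ) (n : ℕ) :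
    Integrable (fun ω => φ (pSum X n ω)) μ := by
  refine Integrable.mono' (integrable_const (max |φ (-(n:ℝ))| |φ (n:ℝ)|))
    ((hmono.measurable.comp (measurable_pSum hX n)).aestronglyMeasurable) ?_
  filter_upwards [ae_abs_pSum_le hprob hstat hX hbound n] with ω hω
  rw [Real.norm_eq_abs]
  have h1 : φ (-(n:ℝ)) ≤ φ (pSum X n ω) := hmono (by cases abs_le.mp hω; linarith)
  have h2 : φ (pSum X n ω) ≤ φ (n:ℝ) := hmono (by cases abs_le.mp hω; linarith)
  exact abs_le_max_abs_abs h1 h2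

lemma sum_sq_Icc_ge (L : ℕ) : ((L:ℝ))^3 / 3 ≤ ∑ k ∈ Finset.Icc 1 L, ((k:ℝ))^2 := by
  induction L with
  | zero => simp
  | succ L ih =>
    rw [Finset.sum_Icc_succ_top (by omega)]
    push_cast
    push_cast at ih
    have hL0 : (0:ℝ) ≤ (L:ℝ) := Nat.cast_nonneg L
    have key : ((L:ℝ)+1)^3/3 ≤ (L:ℝ)^3/3 + ((L:ℝ)+1)^2 := by nlinarith [hL0]
    linarith

end FinalHelpers

end DCF

open DCF in
/-- Inequality (5.1): there is a universal constant `c` such that for every nondecreasing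
nonnegative convex `φ`, every `x > 0` with `φ(x) > 0` and every `n ≥ 1`,
`P(S_n^* ≥ 4x) ≤ E(φ(S_n))/φ(x) + c (n/x⁴)(1 + ∑_{k≥1} k (k∧x) θ̄(k))`. -/
theorem deviation_convex_function :
    ∃ c : ℝ, 0 < c ∧
      ∀ (Ω : Type) (_ : MeasurableSpace Ω) (μ : Measure Ω) (X : ℤ → Ω → ℝ),
        IsProbabilityMeasure μ →
        (∀ i, Measurable (X i)) →
        IsStrictlyStationary μ X →
        (∀ᵐ ω ∂μ, |X 0 ω| ≤ 1) →
        (∫ ω, X 0 ω ∂μ) = 0 →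
        ∀ φ : ℝ → ℝ, Monotone φ → (∀ t, 0 ≤ φ t) → ConvexOn ℝ Set.univ φ →
          ∀ x : ℝ, 0 < x → 0 < φ x → ∀ n : ℕ, 0 < n →
            μ {ω | 4 * x ≤ pSumMax X n ω} ≤
              ENNReal.ofReal ((∫ ω, φ (pSum X n ω) ∂μ) / φ x)
              + ENNReal.ofReal c * ENNReal.ofReal ((n : ℝ) / x ^ 4) *
                  (1 + ∑' k : ℕ,
                    ENNReal.ofReal ((k : ℝ) * min (k : ℝ) x * thetabar μ X k)) := by
  classical
  refine ⟨4096, by norm_num, ?_⟩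
  intro Ω mΩ μ X hprob hX hstat hbound _hmean φ hmono hnonneg hconv x hx hφx n hn
  haveI := hprob
  have hn1 : (1:ℝ) ≤ (n:ℝ) := by exact_mod_cast hn
  have hx4 : (0:ℝ) < x ^ 4 := by positivity
  by_cases hcase : x ^ 4 ≤ 4096 * (n:ℝ)
  · -- trivial branch
    have h2 : (1:ℝ≥0∞) ≤ ENNReal.ofReal 4096 * ENNReal.ofReal ((n:ℝ)/x^4) := by
      rw [← ENNReal.ofReal_mul (by norm_num : (0:ℝ) ≤ 4096), ← ENNReal.ofReal_one]
      apply ENNReal.ofReal_le_ofReal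
      have : (4096:ℝ) * ((n:ℝ)/x^4) = 4096 * (n:ℝ) / x^4 := by ring
      rw [this, le_div_iff₀ hx4]
      linarith
    calc μ {ω | 4 * x ≤ pSumMax X n ω} ≤ 1 := prob_le_one
      _ ≤ ENNReal.ofReal 4096 * ENNReal.ofReal ((n:ℝ)/x^4) := h2
      _ ≤ ENNReal.ofReal 4096 * ENNReal.ofReal ((n:ℝ)/x^4) *
            (1 + ∑' k : ℕ, ENNReal.ofReal ((k : ℝ) * min (k : ℝ) x * thetabar μ X k)) := by
          conv_lhs => rw [← mul_one (ENNReal.ofReal 4096 * ENNReal.ofReal ((n:ℝ)/x^4))]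
          exact mul_le_mul' le_rfl le_self_add
      _ ≤ _ := self_le_add_left _ _
  · push_neg at hcase
    have hx8 : (8:ℝ) < x := by
      by_contra hle
      push_neg at hle
      have : x ^ 4 ≤ 8 ^ 4 := pow_le_pow_left₀ (le_of_lt hx) hle 4
      have h84 : (8:ℝ)^4 = 4096 := by norm_num
      nlinarith
    set L : ℕ := ⌈x/8⌉₊ with hL_def
    have hL1 : 1 ≤ L := by
      have : 0 < L := Nat.ceil_pos.mpr (by positivity)
      omega
    have hLge : x/8 ≤ (L:ℝ) := Nat.le_ceil _
    have hLlt : (L:ℝ) < x/8 + 1 := Nat.ceil_lt_add_one (by positivity)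
    have hL4 : 4*(L:ℝ) ≤ x := by linarith
    have hLlex : (L:ℝ) ≤ x := by linarith
    obtain ⟨a, ha0, htan⟩ := convex_tangent hmono hconv x
    have hφint := integrable_phi_pSum hprob hstat hX hbound hmono n
    have hφ_nonneg : 0 ≤ ∫ ω, φ (pSum X n ω) ∂μ := integral_nonneg fun ω => hnonneg _
    rcases eq_or_lt_of_le ha0 with ha | ha
    · -- a = 0 : the φ-term alone is ≥ 1
      have hpt : ∀ ω, φ x ≤ φ (pSum X n ω) := fun ω => by
        have := htan (pSum X n ω); rw [← ha] at this; linarith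
      have hge : φ x ≤ ∫ ω, φ (pSum X n ω) ∂μ := by
        calc φ x = ∫ _ω, φ x ∂μ := by simp
          _ ≤ ∫ ω, φ (pSum X n ω) ∂μ := integral_mono (integrable_const _) hφint hpt
      have h1 : (1:ℝ≥0∞) ≤ ENNReal.ofReal ((∫ ω, φ (pSum X n ω) ∂μ) / φ x) := by
        rw [← ENNReal.ofReal_one]
        exact ENNReal.ofReal_le_ofReal ((one_le_div hφx).mpr hge)
      calc μ {ω | 4 * x ≤ pSumMax X n ω} ≤ 1 := prob_le_one
        _ ≤ ENNReal.ofReal ((∫ ω, φ (pSum X n ω) ∂μ) / φ x) := h1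
        _ ≤ _ := le_self_add
    · -- a > 0
      set b := x - φ x / a with hb_def
      have hbx : b < x := by
        rw [hb_def]
        have : 0 < φ x / a := div_pos hφx ha
        linarith
      have hmainb := main_bound hprob hstat hX hbound hn hL1 hx hbx hL4
      -- φ-term domination
      have hIb : ∫ ω, max (pSum X n ω - b) 0 ∂μ ≤ (∫ ω, φ (pSum X n ω) ∂μ) / a := by
        have hIb_int : Integrable (fun ω => max (pSum X n ω - b) 0) μ :=
          Integrable.pos_part ((integrable_pSum hprob hstat hX hbound n).sub
            (integrable_const b))
        have hint2 : ∫ ω, φ (pSum X n ω) / a ∂μ = (∫ ω, φ (pSum X n ω) ∂μ) / a :=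
          integral_div a _
        rw [← hint2]
        refine integral_mono hIb_int (hφint.div_const a) fun ω => ?_
        have h1 := htan (pSum X n ω)
        have h2 := hnonneg (pSum X n ω)
        have hxb : a * (x - b) = φ x := by
          rw [hb_def, sub_sub_cancel]
          field_simp
        refine max_le ?_ (by positivity)
        rw [le_div_iff₀ ha]
        nlinarith
      have hx_b : x - b = φ x / a := by rw [hb_def]; ring
      have hfirst : (∫ ω, max (pSum X n ω - b) 0 ∂μ) / (x - b)
          ≤ (∫ ω, φ (pSum X n ω) ∂μ) / φ x := by
        rw [hx_b]
        calc (∫ ω, max (pSum X n ω - b) 0 ∂μ) / (φ x / a)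
            ≤ ((∫ ω, φ (pSum X n ω) ∂μ) / a) / (φ x / a) :=
              (div_le_div_iff_of_pos_right (div_pos hφx ha)).mpr hIb
          _ = (∫ ω, φ (pSum X n ω) ∂μ) / φ x := by
              field_simp
      -- θ̄-term domination
      set tb := thetabar μ X L with htb_def
      have htb0 : 0 ≤ tb := thetabar_nonneg hprob hstat hX hbound L
      set Θ := ∑ k ∈ Finset.Icc 1 L, (k:ℝ) * min (k:ℝ) x * thetabar μ X k with hΘ_def
      have hterm_nonneg : ∀ k ∈ Finset.Icc 1 L, 0 ≤ (k:ℝ) * min (k:ℝ) x * thetabar μ X k := by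
        intro k _
        have : (0:ℝ) ≤ min (k:ℝ) x := le_min (Nat.cast_nonneg k) (le_of_lt hx)
        exact mul_nonneg (mul_nonneg (Nat.cast_nonneg k) this)
          (thetabar_nonneg hprob hstat hX hbound k)
      have hΘ0 : 0 ≤ Θ := Finset.sum_nonneg hterm_nonneg
      have hkey : tb * x^3 ≤ 1536 * Θ := by
        have hstep : ∀ k ∈ Finset.Icc 1 L, (k:ℝ)^2 * tb ≤ (k:ℝ) * min (k:ℝ) x * thetabar μ X k := by
          intro k hk
          obtain ⟨hk1, hkL⟩ := Finset.mem_Icc.mp hk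
          have hkx : (k:ℝ) ≤ x := le_trans (by exact_mod_cast hkL) hLlex
          rw [min_eq_left hkx]
          have htbk : tb ≤ thetabar μ X k := thetabar_antitone hprob hstat hX hbound hkL
          have : (k:ℝ)^2 * tb ≤ (k:ℝ)^2 * thetabar μ X k :=
            mul_le_mul_of_nonneg_left htbk (by positivity)
          calc (k:ℝ)^2 * tb ≤ (k:ℝ)^2 * thetabar μ X k := this
            _ = (k:ℝ) * (k:ℝ) * thetabar μ X k := by ring
        have hsum : (∑ k ∈ Finset.Icc 1 L, (k:ℝ)^2) * tb ≤ Θ := by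
          rw [Finset.sum_mul]
          exact Finset.sum_le_sum hstep
        have hs3 : ((L:ℝ))^3 / 3 * tb ≤ (∑ k ∈ Finset.Icc 1 L, (k:ℝ)^2) * tb :=
          mul_le_mul_of_nonneg_right (sum_sq_Icc_ge L) htb0
        have hL3 : (x/8)^3 ≤ ((L:ℝ))^3 := pow_le_pow_left₀ (by positivity) hLge 3
        have : (x/8)^3 / 3 * tb ≤ ((L:ℝ))^3 / 3 * tb := by
          apply mul_le_mul_of_nonneg_right _ htb0
          linarith
        have hfin : (x/8)^3 / 3 * tb ≤ Θ := by linarith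
        have hexp : (x/8)^3 / 3 = x^3 / 1536 := by ring
        rw [hexp] at hfin
        nlinarith
      have hjunk : (n:ℝ) * tb / x ≤ 4096 * ((n:ℝ)/x^4) * (1+Θ) := by
        have heq : 4096 * ((n:ℝ)/x^4) * (1+Θ) = 4096 * (n:ℝ) * (1+Θ) / x^4 := by ring
        rw [heq, div_le_div_iff₀ (by positivity) hx4]
        have hnx : (0:ℝ) ≤ (n:ℝ) * x := by positivity
        nlinarith [mul_le_mul_of_nonneg_left hkey hnx, mul_nonneg hnx hΘ0]
      -- assemble
      have hreal : (μ {ω | 4 * x ≤ pSumMax X n ω}).toReal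
          ≤ (∫ ω, φ (pSum X n ω) ∂μ) / φ x + 4096 * ((n:ℝ)/x^4) * (1+Θ) :=
        le_trans hmainb (add_le_add hfirst hjunk)
      have hofΘ : ENNReal.ofReal (1+Θ)
          ≤ 1 + ∑' k : ℕ, ENNReal.ofReal ((k : ℝ) * min (k : ℝ) x * thetabar μ X k) := by
        rw [ENNReal.ofReal_add (by norm_num) hΘ0, ENNReal.ofReal_one]
        refine add_le_add le_rfl ?_
        rw [hΘ_def, ENNReal.ofReal_sum_of_nonneg hterm_nonneg]
        exact ENNReal.sum_le_tsum _
      calc μ {ω | 4 * x ≤ pSumMax X n ω}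
          = ENNReal.ofReal ((μ {ω | 4 * x ≤ pSumMax X n ω}).toReal) :=
            (ENNReal.ofReal_toReal (measure_ne_top μ _)).symm
        _ ≤ ENNReal.ofReal ((∫ ω, φ (pSum X n ω) ∂μ) / φ x + 4096 * ((n:ℝ)/x^4) * (1+Θ)) :=
            ENNReal.ofReal_le_ofReal hreal
        _ ≤ ENNReal.ofReal ((∫ ω, φ (pSum X n ω) ∂μ) / φ x)
              + ENNReal.ofReal (4096 * ((n:ℝ)/x^4) * (1+Θ)) := ENNReal.ofReal_add_le
        _ ≤ ENNReal.ofReal ((∫ ω, φ (pSum X n ω) ∂μ) / φ x)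
              + ENNReal.ofReal 4096 * ENNReal.ofReal ((n:ℝ)/x^4) *
                (1 + ∑' k : ℕ, ENNReal.ofReal ((k : ℝ) * min (k : ℝ) x * thetabar μ X k)) := by
            refine add_le_add le_rfl ?_
            rw [ENNReal.ofReal_mul (by positivity : (0:ℝ) ≤ 4096 * ((n:ℝ)/x^4)),
              ENNReal.ofReal_mul (by norm_num : (0:ℝ) ≤ 4096)]
            exact mul_le_mul' le_rfl hofΘ
end
end

section
/- Let (X'_i)_{i∈ℤ} be an independent copy of the process (X_i)_{i∈ℤ}, set Z_i = X_i − X'_i, let F̃_0 = σ(X_i, X'_i : i ≤ 0), and let θ_{Z,p,q}(k) be defined as θ_{X,p,q}(k) but with the sequence (Z_i) in place of (X_i) and F̃_0 in place of F_0. Then for any integer k ≥ 0 and any positive integers p and q, θ_{Z,p,q}(k) ≤ 2^{q+1} θ_{X,p,q}(k). -/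
open MeasureTheory ProbabilityTheory Filter Set Asymptotics
open scoped ENNReal NNReal Topology MeasureTheory

noncomputable section

section Aux

variable {Ω : Type*} [mΩ : MeasurableSpace Ω] {μ : Measure Ω} [IsProbabilityMeasure μ]

lemma my_integrable_of_abs_le_one {f : Ω → ℝ} (hf : AEStronglyMeasurable f μ)
    (h : ∀ᵐ ω ∂μ, |f ω| ≤ 1) : Integrable f μ :=
  (integrable_const (1 : ℝ)).mono' hf (by simpa [Real.norm_eq_abs] using h)

lemma my_sup_eq_generateFrom (m1 m2 : MeasurableSpace Ω) :
    m1 ⊔ m2 = MeasurableSpace.generateFrom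
      {s | ∃ t1 t2, MeasurableSet[m1] t1 ∧ MeasurableSet[m2] t2 ∧ s = t1 ∩ t2} := by
  apply le_antisymm
  · refine sup_le ?_ ?_
    · intro s hs
      exact MeasurableSpace.measurableSet_generateFrom
        ⟨s, univ, hs, MeasurableSet.univ, (inter_univ s).symm⟩
    · intro s hs
      exact MeasurableSpace.measurableSet_generateFrom
        ⟨univ, s, MeasurableSet.univ, hs, (univ_inter s).symm⟩
  · refine MeasurableSpace.generateFrom_le ?_
    rintro s ⟨t1, t2, h1, h2, rfl⟩
    exact MeasurableSet.inter ((le_sup_left : m1 ≤ m1 ⊔ m2) _ h1)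
      ((le_sup_right : m2 ≤ m1 ⊔ m2) _ h2)

lemma my_isPiSystem_pair (m1 m2 : MeasurableSpace Ω) :
    IsPiSystem {s : Set Ω | ∃ t1 t2, MeasurableSet[m1] t1 ∧ MeasurableSet[m2] t2 ∧ s = t1 ∩ t2} := by
  rintro s ⟨a1, a2, ha1, ha2, rfl⟩ t ⟨b1, b2, hb1, hb2, rfl⟩ -
  exact ⟨a1 ∩ b1, a2 ∩ b2, ha1.inter hb1, ha2.inter hb2, by rw [inter_inter_inter_comm]⟩

omit mΩ in
lemma my_condexp_mul_of_indep
    {m1 m2 M1 M2 : MeasurableSpace Ω} [mΩ : MeasurableSpace Ω]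
    {μ : Measure Ω} [IsProbabilityMeasure μ]
    (h1 : m1 ≤ M1) (h2 : m2 ≤ M2)
    (hM1 : M1 ≤ mΩ) (hM2 : M2 ≤ mΩ) (hind : Indep M1 M2 μ)
    {f g : Ω → ℝ} (hf : Measurable[M1] f) (hg : Measurable[M2] g)
    (hfb : ∀ᵐ ω ∂μ, |f ω| ≤ 1) (hgb : ∀ᵐ ω ∂μ, |g ω| ≤ 1) :
    μ[fun ω => f ω * g ω | m1 ⊔ m2] =ᵐ[μ] fun ω => (μ[f|m1]) ω * (μ[g|m2]) ω := by
  have hm1 : m1 ≤ mΩ := h1.trans hM1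
  have hm2 : m2 ≤ mΩ := h2.trans hM2
  have hm : m1 ⊔ m2 ≤ mΩ := sup_le hm1 hm2
  haveI : SigmaFinite (μ.trim hm1) := by
    have : IsFiniteMeasure (μ.trim hm1) := isFiniteMeasure_trim hm1
    infer_instance
  haveI : SigmaFinite (μ.trim hm2) := by
    have : IsFiniteMeasure (μ.trim hm2) := isFiniteMeasure_trim hm2
    infer_instance
  haveI : SigmaFinite (μ.trim hm) := by
    have : IsFiniteMeasure (μ.trim hm) := isFiniteMeasure_trim hm
    infer_instance
  have hf' : Measurable f := hf.mono hM1 le_rfl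
  have hg' : Measurable g := hg.mono hM2 le_rfl
  have intf : Integrable f μ := my_integrable_of_abs_le_one hf'.aestronglyMeasurable hfb
  have intg : Integrable g μ := my_integrable_of_abs_le_one hg'.aestronglyMeasurable hgb
  have hfgb : ∀ᵐ ω ∂μ, |f ω * g ω| ≤ 1 := by
    filter_upwards [hfb, hgb] with ω h1' h2'
    rw [abs_mul]
    exact mul_le_one₀ h1' (abs_nonneg _) h2'
  have intfg : Integrable (fun ω => f ω * g ω) μ :=
    my_integrable_of_abs_le_one (hf'.mul hg').aestronglyMeasurable hfgb
  set f1 := μ[f|m1] with hf1def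
  set g1 := μ[g|m2] with hg1def
  have hf1sm : StronglyMeasurable[m1] f1 := stronglyMeasurable_condExp
  have hg1sm : StronglyMeasurable[m2] g1 := stronglyMeasurable_condExp
  have hf1 : Measurable[M1] f1 := (hf1sm.measurable).mono h1 le_rfl
  have hg1 : Measurable[M2] g1 := (hg1sm.measurable).mono h2 le_rfl
  have hf1b : ∀ᵐ ω ∂μ, |f1 ω| ≤ 1 := by
    simpa using ae_bdd_condExp_of_ae_bdd (R := 1) (by simpa using hfb)
  have hg1b : ∀ᵐ ω ∂μ, |g1 ω| ≤ 1 := by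
    simpa using ae_bdd_condExp_of_ae_bdd (R := 1) (by simpa using hgb)
  have intf1 : Integrable f1 μ := integrable_condExp
  have intg1 : Integrable g1 μ := integrable_condExp
  have intf1g1 : Integrable (fun ω => f1 ω * g1 ω) μ := by
    refine my_integrable_of_abs_le_one ?_ ?_
    · exact ((hf1.mono hM1 le_rfl).mul (hg1.mono hM2 le_rfl)).aestronglyMeasurable
    · filter_upwards [hf1b, hg1b] with ω h1' h2'
      rw [abs_mul]; exact mul_le_one₀ h1' (abs_nonneg _) h2'
  have key : ∀ (φ ψ : Ω → ℝ), Measurable[M1] φ → Measurable[M2] ψ →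
      Integrable φ μ → Integrable ψ μ →
      ∫ ω, φ ω * ψ ω ∂μ = (∫ ω, φ ω ∂μ) * ∫ ω, ψ ω ∂μ := by
    intro φ ψ hφ hψ hiφ hiψ
    have hip : IndepFun φ ψ μ := by
      rw [IndepFun_iff_Indep]
      exact indep_of_indep_of_le_right
        (indep_of_indep_of_le_left hind (measurable_iff_comap_le.mp hφ))
        (measurable_iff_comap_le.mp hψ)
    exact hip.integral_mul_eq_mul_integral hiφ.aestronglyMeasurable hiψ.aestronglyMeasurable
  have heq : ∀ s, MeasurableSet[m1 ⊔ m2] s →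
      ∫ ω in s, f ω * g ω ∂μ = ∫ ω in s, f1 ω * g1 ω ∂μ := by
    have huniv : ∫ ω, f ω * g ω ∂μ = ∫ ω, f1 ω * g1 ω ∂μ := by
      rw [key f g hf hg intf intg, key f1 g1 hf1 hg1 intf1 intg1,
        hf1def, hg1def, integral_condExp hm1, integral_condExp hm2]
    refine MeasurableSpace.induction_on_inter (m := m1 ⊔ m2)
      (C := fun s _ => ∫ ω in s, f ω * g ω ∂μ = ∫ ω in s, f1 ω * g1 ω ∂μ)
      (my_sup_eq_generateFrom m1 m2) (my_isPiSystem_pair m1 m2) (by simp) ?_ ?_ ?_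
    · rintro t ⟨t1, t2, ht1, ht2, rfl⟩
      have h1t : MeasurableSet t1 := hm1 _ ht1
      have h2t : MeasurableSet t2 := hm2 _ ht2
      have e : ∀ (u v : Ω → ℝ), (t1 ∩ t2).indicator (fun ω => u ω * v ω)
          = fun ω => (t1.indicator u ω) * (t2.indicator v ω) := by
        intro u v
        funext ω
        by_cases hω1 : ω ∈ t1 <;> by_cases hω2 : ω ∈ t2 <;>
          simp [Set.indicator, hω1, hω2]
      rw [← integral_indicator (h1t.inter h2t), ← integral_indicator (h1t.inter h2t),
        e f g, e f1 g1,
        key _ _ (hf.indicator (h1 _ ht1)) (hg.indicator (h2 _ ht2))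
          (intf.indicator h1t) (intg.indicator h2t),
        key _ _ (hf1.indicator (h1 _ ht1)) (hg1.indicator (h2 _ ht2))
          (intf1.indicator h1t) (intg1.indicator h2t),
        integral_indicator h1t, integral_indicator h2t,
        integral_indicator h1t, integral_indicator h2t,
        setIntegral_condExp hm1 intf ht1, setIntegral_condExp hm2 intg ht2]
    · intro t htm ht
      have htm' : MeasurableSet t := hm _ htm
      have e1 := integral_add_compl htm' intfg
      have e2 := integral_add_compl htm' intf1g1
      linarith
    · intro u hdisj humeas hueq
      have h' : ∀ i, MeasurableSet (u i) := fun i => hm _ (humeas i)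
      rw [integral_iUnion h' hdisj intfg.integrableOn,
        integral_iUnion h' hdisj intf1g1.integrableOn]
      exact tsum_congr hueq
  refine (ae_eq_condExp_of_forall_setIntegral_eq hm intfg
    (fun s _ _ => intf1g1.integrableOn) (fun s hs _ => (heq s hs).symm) ?_).symm
  exact ((hf1sm.mono le_sup_left).mul (hg1sm.mono le_sup_right)).aestronglyMeasurable

lemma my_condexp_map {α : Type*} {G0 : MeasurableSpace α} [mα : MeasurableSpace α]
    {μ : Measure Ω} [IsProbabilityMeasure μ]
    {Φ : Ω → α} (hΦ : Measurable Φ) (hG0 : G0 ≤ mα)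
    {h : α → ℝ} (hh : Measurable h) (hhb : ∀ᵐ x ∂(μ.map Φ), |h x| ≤ 1) :
    μ[fun ω => h (Φ ω) | G0.comap Φ] =ᵐ[μ] fun ω => ((μ.map Φ)[h | G0]) (Φ ω) := by
  set ν := μ.map Φ with hν
  haveI : IsProbabilityMeasure ν := Measure.isProbabilityMeasure_map hΦ.aemeasurable
  have hmc : G0.comap Φ ≤ mΩ :=
    (MeasurableSpace.comap_mono hG0).trans (measurable_iff_comap_le.mp hΦ)
  haveI : SigmaFinite (μ.trim hmc) := by
    have : IsFiniteMeasure (μ.trim hmc) := isFiniteMeasure_trim hmc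
    infer_instance
  haveI : SigmaFinite (ν.trim hG0) := by
    have : IsFiniteMeasure (ν.trim hG0) := isFiniteMeasure_trim hG0
    infer_instance
  have hhb' : ∀ᵐ ω ∂μ, |h (Φ ω)| ≤ 1 := by
    have hset : MeasurableSet {x : α | |h x| ≤ 1} :=
      measurableSet_le hh.abs measurable_const
    exact (ae_map_iff hΦ.aemeasurable hset).mp hhb
  have inth' : Integrable (fun ω => h (Φ ω)) μ :=
    my_integrable_of_abs_le_one (hh.comp hΦ).aestronglyMeasurable hhb'
  have inth : Integrable h ν := my_integrable_of_abs_le_one hh.aestronglyMeasurable hhb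
  set g := ν[h|G0] with hg
  have hgsm : StronglyMeasurable[G0] g := stronglyMeasurable_condExp
  have hgsm' : StronglyMeasurable[mα] g := hgsm.mono hG0
  have intg : Integrable g ν := integrable_condExp
  have intgΦ : Integrable (fun ω => g (Φ ω)) μ := by
    have := (integrable_map_measure hgsm'.aestronglyMeasurable hΦ.aemeasurable).mp intg
    exact this
  have hΦ' : @Measurable Ω α (G0.comap Φ) G0 Φ := fun s hs => ⟨s, hs, rfl⟩
  refine (ae_eq_condExp_of_forall_setIntegral_eq hmc inth'
    (fun s _ _ => intgΦ.integrableOn) ?_ ?_).symm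
  · intro s hs _
    rw [MeasurableSpace.measurableSet_comap] at hs
    obtain ⟨t, ht, rfl⟩ := hs
    have htα : MeasurableSet t := hG0 _ ht
    have hrestrict : ν.restrict t = (μ.restrict (Φ ⁻¹' t)).map Φ :=
      Measure.restrict_map hΦ htα
    calc ∫ ω in Φ ⁻¹' t, g (Φ ω) ∂μ
        = ∫ x in t, g x ∂ν := by
          rw [hrestrict, integral_map hΦ.aemeasurable hgsm'.aestronglyMeasurable]
      _ = ∫ x in t, h x ∂ν := setIntegral_condExp hG0 inth ht
      _ = ∫ ω in Φ ⁻¹' t, h (Φ ω) ∂μ := by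
          rw [hrestrict, integral_map hΦ.aemeasurable hh.aestronglyMeasurable]
  · exact (hgsm.comp_measurable hΦ').aestronglyMeasurable

end Aux

section ThetaAux
variable {Ω : Type*} [mΩ : MeasurableSpace Ω] {μ : Measure Ω} [IsProbabilityMeasure μ]

omit mΩ in
@[to_additive my_shift_sum]
lemma my_shift_prod {M : Type*} [CommMonoid M] {p : ℕ} (n0 : ℕ) (F : Fin p → M) :
    (∏ i : Fin p, if h : (i : ℕ) + n0 < p then F ⟨(i : ℕ) + n0, h⟩ else 1)
      = ∏ m ∈ Finset.univ.filter (fun m : Fin p => n0 ≤ (m : ℕ)), F m := by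
  rw [← Finset.prod_filter_mul_prod_filter_not Finset.univ (fun i : Fin p => (i : ℕ) + n0 < p)]
  have h2 : (∏ i ∈ Finset.univ.filter (fun i : Fin p => ¬((i : ℕ) + n0 < p)),
      if h : (i : ℕ) + n0 < p then F ⟨(i : ℕ) + n0, h⟩ else 1) = 1 := by
    refine Finset.prod_eq_one ?_
    intro i hi
    rw [Finset.mem_filter] at hi
    rw [dif_neg hi.2]
  rw [h2, mul_one]
  refine Finset.prod_bij
    (fun a ha => (⟨(a : ℕ) + n0, (Finset.mem_filter.mp ha).2⟩ : Fin p)) ?_ ?_ ?_ ?_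
  · intro a ha
    simp
  · intro a1 h1 a2 h2 he
    have h3 := congrArg Fin.val he
    simp only at h3
    exact Fin.ext (by omega)
  · intro mm hmm
    rw [Finset.mem_filter] at hmm
    have h4 := mm.isLt
    refine ⟨⟨(mm : ℕ) - n0, by omega⟩,
      Finset.mem_filter.mpr ⟨Finset.mem_univ _, by simp; omega⟩, ?_⟩
    apply Fin.ext
    simp
    omega
  · intro a ha
    rw [dif_pos (Finset.mem_filter.mp ha).2]

lemma my_prod_meas {Y : ℤ → Ω → ℝ} (hY : ∀ i, Measurable (Y i)) {p : ℕ}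
    (κ : Fin p → ℤ) (b : Fin p → ℕ) :
    Measurable (fun ω => ∏ i, (Y (κ i) ω) ^ (b i)) :=
  Finset.measurable_prod Finset.univ (fun i _ => (hY (κ i)).pow_const (b i))

lemma my_prod_bound {Y : ℤ → Ω → ℝ} (hb : ∀ i, ∀ᵐ ω ∂μ, |Y i ω| ≤ 1) {p : ℕ}
    (κ : Fin p → ℤ) (b : Fin p → ℕ) :
    ∀ᵐ ω ∂μ, |∏ i, (Y (κ i) ω) ^ (b i)| ≤ 1 := by
  filter_upwards [ae_all_iff.mpr (fun i : Fin p => hb (κ i))] with ω hω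
  rw [Finset.abs_prod]
  refine Finset.prod_le_one (fun i _ => abs_nonneg _) (fun i _ => ?_)
  rw [abs_pow]
  exact pow_le_one₀ (abs_nonneg _) (hω i)

omit mΩ in
lemma my_term_le_two {m : MeasurableSpace Ω} [mΩ : MeasurableSpace Ω] {μ : Measure Ω}
    [IsProbabilityMeasure μ] {f : Ω → ℝ} (hf : AEStronglyMeasurable f μ)
    (hb : ∀ᵐ ω ∂μ, |f ω| ≤ 1) :
    ∫ ω, |(μ[f|m]) ω - ∫ ω', f ω' ∂μ| ∂μ ≤ 2 := by
  have intf : Integrable f μ := my_integrable_of_abs_le_one hf hb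
  have h1 : ∫ ω, |(μ[f|m]) ω| ∂μ ≤ ∫ ω, |f ω| ∂μ := integral_abs_condExp_le f
  have h2 : ∫ ω, |f ω| ∂μ ≤ 1 := by
    have := integral_mono_ae intf.abs (integrable_const (1 : ℝ)) hb
    simpa using this
  have h3 : |∫ ω', f ω' ∂μ| ≤ 1 := by
    refine le_trans ?_ h2
    have := norm_integral_le_integral_norm (μ := μ) f
    simpa [Real.norm_eq_abs] using this
  calc ∫ ω, |(μ[f|m]) ω - ∫ ω', f ω' ∂μ| ∂μ
      ≤ ∫ ω, (|(μ[f|m]) ω| + |∫ ω', f ω' ∂μ|) ∂μ := by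
        refine integral_mono_ae ((integrable_condExp.sub (integrable_const _)).abs)
          (integrable_condExp.abs.add (integrable_const _))
          (Filter.Eventually.of_forall fun ω => ?_)
        exact abs_sub _ _
    _ = (∫ ω, |(μ[f|m]) ω| ∂μ) + |∫ ω', f ω' ∂μ| := by
        rw [integral_add integrable_condExp.abs (integrable_const _)]
        simp
    _ ≤ 1 + 1 := add_le_add (h1.trans h2) h3
    _ = 2 := by norm_num

omit mΩ in
lemma my_theta_bddAbove {m : MeasurableSpace Ω} [mΩ : MeasurableSpace Ω] {μ : Measure Ω}
    [IsProbabilityMeasure μ] {Y : ℤ → Ω → ℝ}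
    (hY : ∀ i, Measurable (Y i)) (hb : ∀ i, ∀ᵐ ω ∂μ, |Y i ω| ≤ 1) (p q k : ℕ) :
    BddAbove (Set.range fun ka : {ka : (Fin p → ℤ) × (Fin p → ℕ) //
      StrictMono ka.1 ∧ (∀ i, (k : ℤ) ≤ ka.1 i) ∧
      (∀ i : Fin p, (i : ℕ) = 0 → 1 ≤ ka.2 i) ∧ (∑ i, ka.2 i) ≤ q} =>
      ∫ ω, |(μ[(fun ω' => ∏ i, (Y (ka.1.1 i) ω') ^ (ka.1.2 i)) | m]) ω
        - ∫ ω', ∏ i, (Y (ka.1.1 i) ω') ^ (ka.1.2 i) ∂μ| ∂μ) := by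
  refine ⟨2, ?_⟩
  rintro x ⟨ka, rfl⟩
  exact my_term_le_two (my_prod_meas hY _ _).aestronglyMeasurable (my_prod_bound hb _ _)

def my_idx (p q k : ℕ) (hp : 0 < p) (hq : 0 < q) :
    {ka : (Fin p → ℤ) × (Fin p → ℕ) //
      StrictMono ka.1 ∧ (∀ i, (k : ℤ) ≤ ka.1 i) ∧
      (∀ i : Fin p, (i : ℕ) = 0 → 1 ≤ ka.2 i) ∧ (∑ i, ka.2 i) ≤ q} := by
  refine ⟨(fun i => (k : ℤ) + (i : ℕ), fun i => if (i : ℕ) = 0 then 1 else 0), ?_, ?_, ?_, ?_⟩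
  · intro i j hij
    have : (i : ℕ) < (j : ℕ) := hij
    show (k : ℤ) + ((i : ℕ) : ℤ) < (k : ℤ) + ((j : ℕ) : ℤ)
    omega
  · intro i
    exact le_add_of_nonneg_right (Int.natCast_nonneg _)
  · intro i hi
    simp [hi]
  · have : (∑ i : Fin p, if (i : ℕ) = 0 then 1 else 0) = 1 := by
      rw [Finset.sum_eq_single_of_mem (⟨0, hp⟩ : Fin p) (Finset.mem_univ _)]
      · simp
      · intro i _ hne
        refine if_neg (fun h => hne ?_)
        exact Fin.ext (by simpa using h)
    rw [this]
    exact hq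

omit mΩ in
lemma my_theta_nonneg {m : MeasurableSpace Ω} [mΩ : MeasurableSpace Ω] {μ : Measure Ω}
    [IsProbabilityMeasure μ] {Y : ℤ → Ω → ℝ}
    (hY : ∀ i, Measurable (Y i)) (hb : ∀ i, ∀ᵐ ω ∂μ, |Y i ω| ≤ 1) {p q k : ℕ}
    (hp : 0 < p) (hq : 0 < q) :
    0 ≤ thetaCoef μ m Y p q k := by
  refine le_trans (integral_nonneg fun ω => abs_nonneg _)
    (le_ciSup (my_theta_bddAbove hY hb p q k) (my_idx p q k hp hq))

omit mΩ in
lemma my_condexp_prod_le_theta {m : MeasurableSpace Ω} [mΩ : MeasurableSpace Ω] {μ : Measure Ω}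
    [IsProbabilityMeasure μ] (hmm : m ≤ mΩ) {Y : ℤ → Ω → ℝ}
    (hY : ∀ i, Measurable (Y i)) (hb : ∀ i, ∀ᵐ ω ∂μ, |Y i ω| ≤ 1)
    {p q k : ℕ} (hp : 0 < p) (hq : 0 < q)
    {κ : Fin p → ℤ} {b : Fin p → ℕ} (hκ : StrictMono κ) (hκk : ∀ i, (k : ℤ) ≤ κ i)
    (hbq : ∑ i, b i ≤ q) :
    ∫ ω, |(μ[(fun ω' => ∏ i, (Y (κ i) ω') ^ (b i)) | m]) ω
        - ∫ ω', ∏ i, (Y (κ i) ω') ^ (b i) ∂μ| ∂μ ≤ thetaCoef μ m Y p q k := by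
  classical
  by_cases hz : ∀ i, b i = 0
  · have hone : (fun ω' => ∏ i, (Y (κ i) ω') ^ (b i)) = fun _ => (1 : ℝ) := by
      funext ω; simp [hz]
    rw [hone, condExp_const hmm (1 : ℝ)]
    have : ∫ ω', (1 : ℝ) ∂μ = 1 := by simp
    rw [this]
    simp only [sub_self, abs_zero, integral_zero]
    exact my_theta_nonneg hY hb hp hq
  · push_neg at hz
    have hex : ∃ n, ∃ h : n < p, b ⟨n, h⟩ ≠ 0 := by
      obtain ⟨i, hi⟩ := hz
      exact ⟨(i : ℕ), i.isLt, by simpa using hi⟩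
    set n0 := Nat.find hex with hn0def
    obtain ⟨hn0p, hbn0⟩ := Nat.find_spec hex
    have hmin : ∀ mlt : ℕ, mlt < n0 → ∀ h : mlt < p, b ⟨mlt, h⟩ = 0 := by
      intro mlt hlt h
      by_contra hne
      exact Nat.find_min hex hlt ⟨h, hne⟩
    set κ' : Fin p → ℤ := fun i => if h : (i : ℕ) + n0 < p then κ ⟨(i : ℕ) + n0, h⟩
      else κ ⟨p - 1, by omega⟩ + (((i : ℕ) + n0 - (p - 1) : ℕ) : ℤ) with hκ'def
    set a' : Fin p → ℕ := fun i => if h : (i : ℕ) + n0 < p then b ⟨(i : ℕ) + n0, h⟩ else 0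
      with ha'def
    have hsm : StrictMono κ' := by
      intro i1 i2 h12
      have hx : (i1 : ℕ) < (i2 : ℕ) := h12
      simp only [hκ'def]
      by_cases h1 : (i1 : ℕ) + n0 < p <;> by_cases h2 : (i2 : ℕ) + n0 < p
      · rw [dif_pos h1, dif_pos h2]
        exact hκ (by simp only [Fin.mk_lt_mk]; omega)
      · rw [dif_pos h1, dif_neg h2]
        have hle : κ ⟨(i1 : ℕ) + n0, h1⟩ ≤ κ ⟨p - 1, by omega⟩ :=
          hκ.monotone (by simp only [Fin.mk_le_mk]; omega)
        have hpos : (1 : ℤ) ≤ (((i2 : ℕ) + n0 - (p - 1) : ℕ) : ℤ) := by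
          have h5 : 1 ≤ (i2 : ℕ) + n0 - (p - 1) := by omega
          exact_mod_cast h5
        omega
      · exact absurd h2 (by omega)
      · rw [dif_neg h1, dif_neg h2]
        have h6 : (((i1 : ℕ) + n0 - (p - 1) : ℕ) : ℤ)
            < (((i2 : ℕ) + n0 - (p - 1) : ℕ) : ℤ) := by
          have : ((i1 : ℕ) + n0 - (p - 1) : ℕ) < ((i2 : ℕ) + n0 - (p - 1) : ℕ) := by omega
          exact_mod_cast this
        omega
    have hge : ∀ i, (k : ℤ) ≤ κ' i := by
      intro i
      simp only [hκ'def]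
      by_cases h1 : (i : ℕ) + n0 < p
      · rw [dif_pos h1]; exact hκk _
      · rw [dif_neg h1]
        have h7 := hκk ⟨p - 1, by omega⟩
        have h0 : (0 : ℤ) ≤ (((i : ℕ) + n0 - (p - 1) : ℕ) : ℤ) := Int.natCast_nonneg _
        omega
    have ha0 : ∀ i : Fin p, (i : ℕ) = 0 → 1 ≤ a' i := by
      intro i hi
      have h1 : (i : ℕ) + n0 < p := by omega
      simp only [ha'def]
      rw [dif_pos h1]
      have h8 : (⟨(i : ℕ) + n0, h1⟩ : Fin p) = ⟨n0, hn0p⟩ := by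
        apply Fin.ext; simp; omega
      rw [h8]
      exact Nat.one_le_iff_ne_zero.mpr hbn0
    have hsum : (∑ i, a' i) ≤ q := by
      calc (∑ i, a' i)
          = ∑ mm ∈ Finset.univ.filter (fun mm : Fin p => n0 ≤ (mm : ℕ)), b mm := by
            simp only [ha'def]
            exact my_shift_sum n0 b
        _ ≤ ∑ mm, b mm := Finset.sum_le_sum_of_subset (Finset.filter_subset _ _)
        _ ≤ q := hbq
    have hprodeq : (fun ω' => ∏ i, (Y (κ' i) ω') ^ (a' i))
        = (fun ω' => ∏ i, (Y (κ i) ω') ^ (b i)) := by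
      funext ω
      have lhs : ∏ i, (Y (κ' i) ω) ^ (a' i)
          = ∏ i : Fin p, (if h : (i : ℕ) + n0 < p
              then (Y (κ ⟨(i : ℕ) + n0, h⟩) ω) ^ (b ⟨(i : ℕ) + n0, h⟩) else 1) := by
        refine Finset.prod_congr rfl (fun i _ => ?_)
        by_cases h1 : (i : ℕ) + n0 < p
        · simp only [hκ'def, ha'def, dif_pos h1]
        · simp only [hκ'def, ha'def, dif_neg h1, pow_zero]
      rw [lhs, my_shift_prod n0 (fun mm => (Y (κ mm) ω) ^ (b mm))]
      symm
      rw [← Finset.prod_filter_mul_prod_filter_not Finset.univ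
        (fun mm : Fin p => n0 ≤ (mm : ℕ))]
      have h2 : (∏ i ∈ Finset.univ.filter (fun mm : Fin p => ¬ n0 ≤ (mm : ℕ)),
          (Y (κ i) ω) ^ (b i)) = 1 := by
        refine Finset.prod_eq_one (fun i hi => ?_)
        rw [Finset.mem_filter] at hi
        have h9 : b i = 0 := by
          have := hmin (i : ℕ) (by omega) i.isLt
          simpa using this
        simp [h9]
      rw [h2, mul_one]
    rw [← hprodeq]
    exact le_ciSup (my_theta_bddAbove hY hb p q k) ⟨(κ', a'), hsm, hge, ha0, hsum⟩

end ThetaAux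

def mySigma {Ω : Type*} (X : ℤ → Ω → ℝ) : MeasurableSpace Ω :=
  ⨆ i : ℤ, MeasurableSpace.comap (X i) Real.measurableSpace

def myG0 : MeasurableSpace (ℤ → ℝ) :=
  ⨆ i ∈ Set.Iic (0 : ℤ), MeasurableSpace.comap (fun v : ℤ → ℝ => v i) Real.measurableSpace
/-- Lemma 5.2: the dependence coefficients of the symmetrized sequence `Z_i = X_i - X'_i`
(with respect to `F̃_0 = σ(X_i, X'_i : i ≤ 0)`) satisfy
`θ_{Z,p,q}(k) ≤ 2^{q+1} θ_{X,p,q}(k)`. -/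
theorem theta_symmetrized_le
    {Ω : Type*} [MeasurableSpace Ω] (μ : Measure Ω) (X X' : ℤ → Ω → ℝ)
    [IsProbabilityMeasure μ]
    (hmeas : ∀ i, Measurable (X i)) (hmeas' : ∀ i, Measurable (X' i))
    (hstat : IsStrictlyStationary μ X)
    (hbdd : ∀ᵐ ω ∂μ, |X 0 ω| ≤ 1)
    (hcent : (∫ ω, X 0 ω ∂μ) = 0)
    (hindep : Indep (⨆ i : ℤ, MeasurableSpace.comap (X' i) Real.measurableSpace)
      (⨆ i : ℤ, MeasurableSpace.comap (X i) Real.measurableSpace) μ)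
    (hcopy : μ.map (fun ω => fun i : ℤ => X' i ω) = μ.map (fun ω => fun i : ℤ => X i ω)) :
    ∀ (k p q : ℕ), 0 < p → 0 < q →
      thetaCoef μ (natFiltration X 0 ⊔ natFiltration X' 0)
          (fun i ω => X i ω - X' i ω) p q k ≤
        2 ^ (q + 1) * thetaCoef μ (natFiltration X 0) X p q k := by
  classical
  intro k p q hp hq
  -- basic measurability and σ-algebra facts
  have hMX : mySigma X ≤ ‹MeasurableSpace Ω› := iSup_le fun i => (hmeas i).comap_le
  have hMX' : mySigma X' ≤ ‹MeasurableSpace Ω› := iSup_le fun i => (hmeas' i).comap_le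
  have h1X : natFiltration X 0 ≤ mySigma X := by
    rw [natFiltration]
    exact iSup₂_le fun i _ =>
      le_iSup (fun j => MeasurableSpace.comap (X j) Real.measurableSpace) i
  have h2X : natFiltration X' 0 ≤ mySigma X' := by
    rw [natFiltration]
    exact iSup₂_le fun i _ =>
      le_iSup (fun j => MeasurableSpace.comap (X' j) Real.measurableSpace) i
  have hm1 : natFiltration X 0 ≤ ‹MeasurableSpace Ω› := h1X.trans hMX
  have hm2 : natFiltration X' 0 ≤ ‹MeasurableSpace Ω› := h2X.trans hMX'
  have hXmX : ∀ i : ℤ, Measurable[mySigma X] (X i) := fun i =>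
    measurable_iff_comap_le.mpr
      (le_iSup (fun j => MeasurableSpace.comap (X j) Real.measurableSpace) i)
  have hXmX' : ∀ i : ℤ, Measurable[mySigma X'] (X' i) := fun i =>
    measurable_iff_comap_le.mpr
      (le_iSup (fun j => MeasurableSpace.comap (X' j) Real.measurableSpace) i)
  have hΦ : Measurable (fun ω => fun i : ℤ => X i ω) := measurable_pi_lambda _ hmeas
  have hΦ' : Measurable (fun ω => fun i : ℤ => X' i ω) := measurable_pi_lambda _ hmeas'
  -- a.e. bounds for all X i and X' i
  have hbX : ∀ i : ℤ, ∀ᵐ ω ∂μ, |X i ω| ≤ 1 := by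
    intro i
    have hmap : μ.map (fun ω => fun _ : Fin 1 => X i ω)
        = μ.map (fun ω => fun _ : Fin 1 => X 0 ω) := by
      have := hstat 1 (fun _ => 0) i
      simpa using this
    have hAmeas : MeasurableSet {v : Fin 1 → ℝ | ¬ |v 0| ≤ 1} :=
      (measurableSet_le ((measurable_pi_apply (0 : Fin 1)).abs) measurable_const).compl
    have hXi : Measurable (fun ω => fun _ : Fin 1 => X i ω) :=
      measurable_pi_lambda _ fun _ => hmeas i
    have hX0 : Measurable (fun ω => fun _ : Fin 1 => X 0 ω) :=
      measurable_pi_lambda _ fun _ => hmeas 0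
    have e1 := congrArg (fun ν : Measure (Fin 1 → ℝ) => ν {v | ¬ |v 0| ≤ 1}) hmap
    beta_reduce at e1
    rw [Measure.map_apply hXi hAmeas, Measure.map_apply hX0 hAmeas] at e1
    rw [ae_iff]
    show μ ((fun ω => fun _ : Fin 1 => X i ω) ⁻¹' {v | ¬ |v 0| ≤ 1}) = 0
    rw [e1]
    exact ae_iff.mp hbdd
  have hbX' : ∀ i : ℤ, ∀ᵐ ω ∂μ, |X' i ω| ≤ 1 := by
    intro i
    have hB : MeasurableSet {v : ℤ → ℝ | ¬ |v i| ≤ 1} :=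
      (measurableSet_le ((measurable_pi_apply i).abs) measurable_const).compl
    have e1 := congrArg (fun ν : Measure (ℤ → ℝ) => ν {v | ¬ |v i| ≤ 1}) hcopy
    beta_reduce at e1
    rw [Measure.map_apply hΦ' hB, Measure.map_apply hΦ hB] at e1
    rw [ae_iff]
    show μ ((fun ω => fun j : ℤ => X' j ω) ⁻¹' {v | ¬ |v i| ≤ 1}) = 0
    rw [e1]
    exact ae_iff.mp (hbX i)
  -- coordinate σ-algebra on path space
  have hG0le : myG0 ≤ MeasurableSpace.pi :=
    iSup₂_le fun i _ => (measurable_pi_apply i).comap_le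
  have hfil : ∀ W : ℤ → Ω → ℝ, natFiltration W 0 = myG0.comap (fun ω => fun i : ℤ => W i ω) := by
    intro W
    unfold natFiltration myG0
    simp_rw [MeasurableSpace.comap_iSup, MeasurableSpace.comap_comp]
    rfl
  have hθ0 : 0 ≤ thetaCoef μ (natFiltration X 0) X p q k := my_theta_nonneg hmeas hbX hp hq
  -- reduce to a single index
  haveI hne : Nonempty {ka : (Fin p → ℤ) × (Fin p → ℕ) //
      StrictMono ka.1 ∧ (∀ i, (k : ℤ) ≤ ka.1 i) ∧
      (∀ i : Fin p, (i : ℕ) = 0 → 1 ≤ ka.2 i) ∧ (∑ i, ka.2 i) ≤ q} :=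
    ⟨my_idx p q k hp hq⟩
  refine ciSup_le ?_
  rintro ⟨⟨κ, a⟩, hsmκ, hgeκ, ha0, hsuma⟩
  set F : Ω → ℝ := fun ω => ∏ i, (X (κ i) ω - X' (κ i) ω) ^ (a i) with hFdef
  show ∫ ω, |(μ[F|natFiltration X 0 ⊔ natFiltration X' 0]) ω - ∫ ω', F ω' ∂μ| ∂μ
      ≤ 2 ^ (q + 1) * thetaCoef μ (natFiltration X 0) X p q k
  set B := Fintype.piFinset (fun i : Fin p => Finset.range (a i + 1)) with hBdef
  set G : (Fin p → ℕ) → Ω → ℝ := fun c ω => ∏ i, (X (κ i) ω) ^ (c i) with hGdef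
  set H : (Fin p → ℕ) → Ω → ℝ := fun c ω => ∏ i, (X' (κ i) ω) ^ (a i - c i) with hHdef
  set Co : (Fin p → ℕ) → ℝ :=
    fun c => ∏ i, ((-1 : ℝ) ^ (c i + a i) * ((a i).choose (c i) : ℝ)) with hCodef
  have hexp : ∀ ω, F ω = ∑ c ∈ B, Co c * (G c ω * H c ω) := by
    intro ω
    calc F ω = ∏ i, ∑ mm ∈ Finset.range (a i + 1),
          (((-1 : ℝ) ^ (mm + a i) * ((a i).choose mm : ℝ))
            * ((X (κ i) ω) ^ mm * (X' (κ i) ω) ^ (a i - mm))) := by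
          refine Finset.prod_congr rfl (fun i _ => ?_)
          rw [sub_pow]
          exact Finset.sum_congr rfl (fun mm _ => by ring)
      _ = ∑ c ∈ B, ∏ i, (((-1 : ℝ) ^ (c i + a i) * ((a i).choose (c i) : ℝ))
            * ((X (κ i) ω) ^ (c i) * (X' (κ i) ω) ^ (a i - c i))) :=
          Finset.prod_univ_sum _ _
      _ = ∑ c ∈ B, Co c * (G c ω * H c ω) := by
          refine Finset.sum_congr rfl (fun c _ => ?_)
          simp only [hCodef, hGdef, hHdef, Finset.prod_mul_distrib]
  -- integrability and bounds for the pieces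
  have hGmeas : ∀ c, Measurable (G c) := fun c => my_prod_meas hmeas κ c
  have hHmeas : ∀ c, Measurable (H c) := fun c => my_prod_meas hmeas' κ (fun i => a i - c i)
  have hGb : ∀ c, ∀ᵐ ω ∂μ, |G c ω| ≤ 1 := fun c => my_prod_bound hbX κ c
  have hHb : ∀ c, ∀ᵐ ω ∂μ, |H c ω| ≤ 1 := fun c => my_prod_bound hbX' κ (fun i => a i - c i)
  have hintG : ∀ c, Integrable (G c) μ :=
    fun c => my_integrable_of_abs_le_one (hGmeas c).aestronglyMeasurable (hGb c)
  have hintH : ∀ c, Integrable (H c) μ :=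
    fun c => my_integrable_of_abs_le_one (hHmeas c).aestronglyMeasurable (hHb c)
  have hGHb : ∀ c, ∀ᵐ ω ∂μ, |G c ω * H c ω| ≤ 1 := by
    intro c
    filter_upwards [hGb c, hHb c] with ω h1 h2
    rw [abs_mul]
    exact mul_le_one₀ h1 (abs_nonneg _) h2
  have hintGH : ∀ c, Integrable (fun ω => G c ω * H c ω) μ := fun c =>
    my_integrable_of_abs_le_one ((hGmeas c).mul (hHmeas c)).aestronglyMeasurable (hGHb c)
  have hGmX : ∀ c, Measurable[mySigma X] (G c) := fun c =>
    Finset.measurable_prod Finset.univ (fun i _ => (hXmX (κ i)).pow_const (c i))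
  have hHmX : ∀ c, Measurable[mySigma X'] (H c) := fun c =>
    Finset.measurable_prod Finset.univ (fun i _ => (hXmX' (κ i)).pow_const (a i - c i))
  -- expectation of products factorizes
  have hEGH : ∀ c, ∫ ω, G c ω * H c ω ∂μ = (∫ ω, G c ω ∂μ) * ∫ ω, H c ω ∂μ := by
    intro c
    have hifun : IndepFun (G c) (H c) μ := by
      rw [IndepFun_iff_Indep]
      exact indep_of_indep_of_le_right
        (indep_of_indep_of_le_left hindep.symm (measurable_iff_comap_le.mp (hGmX c)))
        (measurable_iff_comap_le.mp (hHmX c))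
    exact hifun.integral_mul_eq_mul_integral (hintG c).aestronglyMeasurable (hintH c).aestronglyMeasurable
  -- per-term bound
  have hterm : ∀ c ∈ B, ∫ ω, |(μ[(fun ω' => G c ω' * H c ω')|natFiltration X 0 ⊔ natFiltration X' 0]) ω
      - ∫ ω', G c ω' * H c ω' ∂μ| ∂μ ≤ 2 * thetaCoef μ (natFiltration X 0) X p q k := by
    intro c hc
    have hcle : ∀ i, c i ≤ a i := by
      intro i
      have := (Fintype.mem_piFinset.mp hc) i
      rw [Finset.mem_range] at this
      omega
    have hsumc : (∑ i, c i) ≤ q :=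
      le_trans (Finset.sum_le_sum (fun i _ => hcle i)) hsuma
    have hsumc' : (∑ i, (a i - c i)) ≤ q :=
      le_trans (Finset.sum_le_sum (fun i _ => Nat.sub_le _ _)) hsuma
    -- conditional expectation factorizes
    have hprod := my_condexp_mul_of_indep h1X h2X hMX hMX' hindep.symm
      (hGmX c) (hHmX c) (hGb c) (hHb c)
    -- bound for the X-part
    have hGθ : ∫ ω, |(μ[G c|natFiltration X 0]) ω - ∫ ω', G c ω' ∂μ| ∂μ ≤ thetaCoef μ (natFiltration X 0) X p q k :=
      my_condexp_prod_le_theta hm1 hmeas hbX hp hq hsmκ hgeκ hsumc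
    -- bound for the X'-part, transferred to X via equality in law
    have hHθ : ∫ ω, |(μ[H c|natFiltration X' 0]) ω - ∫ ω', H c ω' ∂μ| ∂μ ≤ thetaCoef μ (natFiltration X 0) X p q k := by
      set c' : Fin p → ℕ := fun i => a i - c i with hc'def
      set hfun : (ℤ → ℝ) → ℝ := fun v => ∏ i, (v (κ i)) ^ (c' i) with hfundef
      have hhm : Measurable hfun :=
        Finset.measurable_prod Finset.univ
          (fun i _ => (measurable_pi_apply (κ i)).pow_const (c' i))
      have hset : MeasurableSet {v : ℤ → ℝ | |hfun v| ≤ 1} :=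
        measurableSet_le hhm.abs measurable_const
      have hbν' : ∀ᵐ v ∂(μ.map (fun ω => fun i : ℤ => X' i ω)), |hfun v| ≤ 1 :=
        (ae_map_iff hΦ'.aemeasurable hset).mpr (my_prod_bound hbX' κ c')
      have hbν : ∀ᵐ v ∂(μ.map (fun ω => fun i : ℤ => X i ω)), |hfun v| ≤ 1 :=
        (ae_map_iff hΦ.aemeasurable hset).mpr (my_prod_bound hbX κ c')
      have hcm' := my_condexp_map hΦ' hG0le hhm hbν'
      have hcm := my_condexp_map hΦ hG0le hhm hbν
      rw [hcopy] at hcm'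
      set ν := μ.map (fun ω => fun i : ℤ => X i ω) with hνdef
      set g : (ℤ → ℝ) → ℝ := ν[hfun|myG0] with hgdef
      have hgsm : StronglyMeasurable[MeasurableSpace.pi] g :=
        stronglyMeasurable_condExp.mono hG0le
      -- constants
      have hc0 : ∫ ω', H c ω' ∂μ = ∫ v, hfun v ∂ν := by
        rw [← hcopy, integral_map hΦ'.aemeasurable hhm.aestronglyMeasurable]
      have hc0' : ∫ v, hfun v ∂ν = ∫ ω', (∏ i, (X (κ i) ω') ^ (c' i)) ∂μ := by
        rw [hνdef, integral_map hΦ.aemeasurable hhm.aestronglyMeasurable]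
      have hm2eq : natFiltration X' 0 = myG0.comap (fun ω => fun i : ℤ => X' i ω) := hfil X'
      have hm1eq : natFiltration X 0 = myG0.comap (fun ω => fun i : ℤ => X i ω) := hfil X
      set c0 : ℝ := ∫ ω', H c ω' ∂μ with hc0def
      have step1 : ∫ ω, |(μ[H c|natFiltration X' 0]) ω - c0| ∂μ
          = ∫ ω, |g ((fun ω' => fun i : ℤ => X' i ω') ω) - c0| ∂μ := by
        refine integral_congr_ae ?_
        have : μ[H c|natFiltration X' 0] =ᵐ[μ] fun ω => g (fun i : ℤ => X' i ω) := by
          rw [hm2eq]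
          exact hcm'
        filter_upwards [this] with ω hω
        rw [hω]
      have step2 : ∫ ω, |g ((fun ω' => fun i : ℤ => X' i ω') ω) - c0| ∂μ
          = ∫ v, |g v - c0| ∂ν := by
        rw [← hcopy, integral_map (f := fun v => |g v - c0|) hΦ'.aemeasurable
          ((hgsm.measurable.sub measurable_const).abs).aestronglyMeasurable]
      have step3 : ∫ v, |g v - c0| ∂ν
          = ∫ ω, |g ((fun ω' => fun i : ℤ => X i ω') ω) - c0| ∂μ := by
        rw [hνdef, integral_map hΦ.aemeasurable]
        exact ((hgsm.measurable.sub measurable_const).abs).aestronglyMeasurable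
      have step4 : ∫ ω, |g ((fun ω' => fun i : ℤ => X i ω') ω) - c0| ∂μ
          = ∫ ω, |(μ[(fun ω' => ∏ i, (X (κ i) ω') ^ (c' i))|natFiltration X 0]) ω - c0| ∂μ := by
        refine integral_congr_ae ?_
        have : μ[(fun ω' => ∏ i, (X (κ i) ω') ^ (c' i))|natFiltration X 0]
            =ᵐ[μ] fun ω => g (fun i : ℤ => X i ω) := by
          rw [hm1eq]
          exact hcm
        filter_upwards [this] with ω hω
        rw [hω]
      rw [step1, step2, step3, step4]
      rw [hc0.trans hc0']
      exact my_condexp_prod_le_theta hm1 hmeas hbX hp hq hsmκ hgeκ hsumc'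
    -- combine the two bounds
    have hEGb : |∫ ω', G c ω' ∂μ| ≤ 1 := by
      have h2 : ∫ ω, |G c ω| ∂μ ≤ 1 := by
        have := integral_mono_ae (hintG c).abs (integrable_const (1 : ℝ)) (hGb c)
        simpa using this
      refine le_trans ?_ h2
      have := norm_integral_le_integral_norm (μ := μ) (G c)
      simpa [Real.norm_eq_abs] using this
    have hcondHb : ∀ᵐ ω ∂μ, |(μ[H c|natFiltration X' 0]) ω| ≤ 1 := by
      simpa using ae_bdd_condExp_of_ae_bdd (R := 1) (m := natFiltration X' 0) (by simpa using hHb c)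
    calc ∫ ω, |(μ[(fun ω' => G c ω' * H c ω')|natFiltration X 0 ⊔ natFiltration X' 0]) ω - ∫ ω', G c ω' * H c ω' ∂μ| ∂μ
        ≤ ∫ ω, (|(μ[G c|natFiltration X 0]) ω - ∫ ω', G c ω' ∂μ| + |(μ[H c|natFiltration X' 0]) ω - ∫ ω', H c ω' ∂μ|) ∂μ := by
          refine integral_mono_ae ((integrable_condExp.sub (integrable_const _)).abs)
            (((integrable_condExp.sub (integrable_const _)).abs).add
              ((integrable_condExp.sub (integrable_const _)).abs)) ?_
          filter_upwards [hprod, hcondHb] with ω hω hHbω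
          rw [hω, hEGH c]
          have expand : (μ[G c|natFiltration X 0]) ω * (μ[H c|natFiltration X' 0]) ω
              - (∫ ω', G c ω' ∂μ) * ∫ ω', H c ω' ∂μ
              = ((μ[G c|natFiltration X 0]) ω - ∫ ω', G c ω' ∂μ) * (μ[H c|natFiltration X' 0]) ω
                + (∫ ω', G c ω' ∂μ) * ((μ[H c|natFiltration X' 0]) ω - ∫ ω', H c ω' ∂μ) := by ring
          rw [expand]
          refine le_trans (abs_add_le _ _) (add_le_add ?_ ?_)
          · rw [abs_mul]
            calc |(μ[G c|natFiltration X 0]) ω - ∫ ω', G c ω' ∂μ| * |(μ[H c|natFiltration X' 0]) ω|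
                ≤ |(μ[G c|natFiltration X 0]) ω - ∫ ω', G c ω' ∂μ| * 1 :=
                  mul_le_mul_of_nonneg_left hHbω (abs_nonneg _)
              _ = _ := mul_one _
          · rw [abs_mul]
            calc |∫ ω', G c ω' ∂μ| * |(μ[H c|natFiltration X' 0]) ω - ∫ ω', H c ω' ∂μ|
                ≤ 1 * |(μ[H c|natFiltration X' 0]) ω - ∫ ω', H c ω' ∂μ| :=
                  mul_le_mul_of_nonneg_right hEGb (abs_nonneg _)
              _ = _ := one_mul _
      _ = (∫ ω, |(μ[G c|natFiltration X 0]) ω - ∫ ω', G c ω' ∂μ| ∂μ)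
            + ∫ ω, |(μ[H c|natFiltration X' 0]) ω - ∫ ω', H c ω' ∂μ| ∂μ :=
          integral_add ((integrable_condExp.sub (integrable_const _)).abs)
            ((integrable_condExp.sub (integrable_const _)).abs)
      _ ≤ thetaCoef μ (natFiltration X 0) X p q k + thetaCoef μ (natFiltration X 0) X p q k := add_le_add hGθ hHθ
      _ = 2 * thetaCoef μ (natFiltration X 0) X p q k := by ring
  -- put everything together
  have hFeq : F = ∑ c ∈ B, (fun ω => Co c * (G c ω * H c ω)) := by
    funext ω
    rw [Finset.sum_apply]
    exact hexp ω
  have hintF : ∀ c ∈ B, Integrable (fun ω => Co c * (G c ω * H c ω)) μ :=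
    fun c _ => (hintGH c).const_mul (Co c)
  have hcond : μ[F|natFiltration X 0 ⊔ natFiltration X' 0] =ᵐ[μ]
      fun ω => ∑ c ∈ B, Co c * (μ[(fun ω' => G c ω' * H c ω')|natFiltration X 0 ⊔ natFiltration X' 0]) ω := by
    have h1 : μ[F|natFiltration X 0 ⊔ natFiltration X' 0] =ᵐ[μ] ∑ c ∈ B, μ[(fun ω => Co c * (G c ω * H c ω))|natFiltration X 0 ⊔ natFiltration X' 0] := by
      rw [hFeq]
      exact condExp_finsetSum hintF _
    have h2 : ∀ᵐ ω ∂μ, ∀ c ∈ B,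
        (μ[(fun ω' => Co c * (G c ω' * H c ω'))|natFiltration X 0 ⊔ natFiltration X' 0]) ω
          = Co c * (μ[(fun ω' => G c ω' * H c ω')|natFiltration X 0 ⊔ natFiltration X' 0]) ω := by
      have hBc : ((B : Set (Fin p → ℕ))).Countable := B.countable_toSet
      rw [show (∀ᵐ ω ∂μ, ∀ c ∈ B,
          (μ[(fun ω' => Co c * (G c ω' * H c ω'))|natFiltration X 0 ⊔ natFiltration X' 0]) ω
            = Co c * (μ[(fun ω' => G c ω' * H c ω')|natFiltration X 0 ⊔ natFiltration X' 0]) ω)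
          = (∀ᵐ ω ∂μ, ∀ c ∈ (B : Set (Fin p → ℕ)),
          (μ[(fun ω' => Co c * (G c ω' * H c ω'))|natFiltration X 0 ⊔ natFiltration X' 0]) ω
            = Co c * (μ[(fun ω' => G c ω' * H c ω')|natFiltration X 0 ⊔ natFiltration X' 0]) ω)
          from rfl]
      rw [ae_ball_iff hBc]
      intro c hc
      have := condExp_smul (μ := μ) (m := natFiltration X 0 ⊔ natFiltration X' 0) (Co c) (fun ω' => G c ω' * H c ω')
      filter_upwards [this] with ω hω
      simpa [Pi.smul_def, smul_eq_mul] using hω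
    filter_upwards [h1, h2] with ω hω1 hω2
    rw [hω1, Finset.sum_apply]
    exact Finset.sum_congr rfl hω2
  have hEF : ∫ ω', F ω' ∂μ = ∑ c ∈ B, Co c * ∫ ω', G c ω' * H c ω' ∂μ := by
    rw [hFeq]
    simp only [Finset.sum_apply]
    rw [integral_finset_sum B hintF]
    exact Finset.sum_congr rfl (fun c _ => integral_const_mul _ _)
  have habs : ∫ ω, |(μ[F|natFiltration X 0 ⊔ natFiltration X' 0]) ω - ∫ ω', F ω' ∂μ| ∂μ
      ≤ ∑ c ∈ B, |Co c| * ∫ ω, |(μ[(fun ω' => G c ω' * H c ω')|natFiltration X 0 ⊔ natFiltration X' 0]) ω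
          - ∫ ω', G c ω' * H c ω' ∂μ| ∂μ := by
    have hint1 : ∀ c ∈ B, Integrable (fun ω =>
        |Co c| * |(μ[(fun ω' => G c ω' * H c ω')|natFiltration X 0 ⊔ natFiltration X' 0]) ω
          - ∫ ω', G c ω' * H c ω' ∂μ|) μ :=
      fun c _ => ((integrable_condExp.sub (integrable_const _)).abs).const_mul _
    calc ∫ ω, |(μ[F|natFiltration X 0 ⊔ natFiltration X' 0]) ω - ∫ ω', F ω' ∂μ| ∂μ
        ≤ ∫ ω, (∑ c ∈ B, |Co c| * |(μ[(fun ω' => G c ω' * H c ω')|natFiltration X 0 ⊔ natFiltration X' 0]) ω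
            - ∫ ω', G c ω' * H c ω' ∂μ|) ∂μ := by
          refine integral_mono_ae ((integrable_condExp.sub (integrable_const _)).abs)
            (integrable_finset_sum B hint1) ?_
          filter_upwards [hcond] with ω hω
          rw [hω, hEF, ← Finset.sum_sub_distrib]
          refine le_trans (Finset.abs_sum_le_sum_abs _ _) ?_
          refine Finset.sum_le_sum (fun c _ => ?_)
          rw [← mul_sub, abs_mul]
      _ = ∑ c ∈ B, |Co c| * ∫ ω, |(μ[(fun ω' => G c ω' * H c ω')|natFiltration X 0 ⊔ natFiltration X' 0]) ω
            - ∫ ω', G c ω' * H c ω' ∂μ| ∂μ := by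
          rw [integral_finset_sum B hint1]
          exact Finset.sum_congr rfl (fun c _ => integral_const_mul _ _)
  have hCosum : (∑ c ∈ B, |Co c|) ≤ 2 ^ q := by
    have e1 : ∀ c, |Co c| = ∏ i, ((a i).choose (c i) : ℝ) := by
      intro c
      rw [hCodef, Finset.abs_prod]
      refine Finset.prod_congr rfl (fun i _ => ?_)
      rw [abs_mul, abs_pow, abs_neg, abs_one, one_pow, one_mul, abs_of_nonneg]
      exact Nat.cast_nonneg _
    calc (∑ c ∈ B, |Co c|) = ∑ c ∈ B, ∏ i, ((a i).choose (c i) : ℝ) :=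
          Finset.sum_congr rfl (fun c _ => e1 c)
      _ = ∏ i, ∑ mm ∈ Finset.range (a i + 1), ((a i).choose mm : ℝ) := by
          rw [hBdef]
          exact (Finset.prod_univ_sum (fun i : Fin p => Finset.range (a i + 1))
            (fun i mm => ((a i).choose mm : ℝ))).symm
      _ = ∏ i, ((2 : ℝ) ^ (a i)) := by
          refine Finset.prod_congr rfl (fun i _ => ?_)
          rw [← Nat.cast_sum]
          rw [Nat.sum_range_choose]
          push_cast
          ring
      _ = (2 : ℝ) ^ (∑ i, a i) := Finset.prod_pow_eq_pow_sum _ _ _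
      _ ≤ 2 ^ q := by
          refine pow_le_pow_right₀ (by norm_num) hsuma
  calc ∫ ω, |(μ[F|natFiltration X 0 ⊔ natFiltration X' 0]) ω - ∫ ω', F ω' ∂μ| ∂μ
      ≤ ∑ c ∈ B, |Co c| * ∫ ω, |(μ[(fun ω' => G c ω' * H c ω')|natFiltration X 0 ⊔ natFiltration X' 0]) ω
          - ∫ ω', G c ω' * H c ω' ∂μ| ∂μ := habs
    _ ≤ ∑ c ∈ B, |Co c| * (2 * thetaCoef μ (natFiltration X 0) X p q k) :=
        Finset.sum_le_sum (fun c hc =>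
          mul_le_mul_of_nonneg_left (hterm c hc) (abs_nonneg _))
    _ = (∑ c ∈ B, |Co c|) * (2 * thetaCoef μ (natFiltration X 0) X p q k) := by
        rw [← Finset.sum_mul]
    _ ≤ 2 ^ q * (2 * thetaCoef μ (natFiltration X 0) X p q k) := by
        refine mul_le_mul_of_nonneg_right hCosum (by positivity)
    _ = 2 ^ (q + 1) * thetaCoef μ (natFiltration X 0) X p q k := by ring
end
end
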